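/- arXiv:1808.02156 — 4 statements merged into one kernel-verified Lean document; each statement's English description precedes it below -/
import Mathlib

section
/- Let B be a skew-symmetrizable n×n integer matrix and let t be a vertex reached from the initial vertex t_0 by a path (i_1,…,i_m). Then C^{−B;t_0}_t = C^{B;t_0}_t + F^{B;t_0}_t · B_t, where C^{−B;t_0}_t denotes the C-matrix for the initial matrix −B along the same path, and B_t is the exchange matrix at t. -/
open Matrix

section Defs

variable {ι : Type} [Fintype ι] [DecidableEq ι]
variable {R : Type} [CommRing R] [LinearOrder R] [IsStrictOrderedRing R]

/-- Entrywise positive part `[A]₊`. -/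
def matPos (A : Matrix ι ι R) : Matrix ι ι R := fun i j => max (A i j) 0

/-- `A^{k•}`: the matrix keeping only the `k`-th row of `A`. -/
def rowSel (k : ι) (A : Matrix ι ι R) : Matrix ι ι R := fun i j => if i = k then A i j else 0

/-- `A^{•k}`: the matrix keeping only the `k`-th column of `A`. -/
def colSel (k : ι) (A : Matrix ι ι R) : Matrix ι ι R := fun i j => if j = k then A i j else 0

/-- Entrywise maximum of two matrices. -/
def emax (A B : Matrix ι ι R) : Matrix ι ι R := fun i j => max (A i j) (B i j)

/-- `J_ℓ`: identity matrix with `(ℓ,ℓ)` entry replaced by `-1`. -/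
def Jmat (ℓ : ι) : Matrix ι ι R := Matrix.diagonal fun i => if i = ℓ then -1 else 1

/-- Matrix mutation `μ_k(B)` in direction `k`. -/
def mutate (B : Matrix ι ι R) (k : ι) : Matrix ι ι R := fun i j =>
  if i = k ∨ j = k then -(B i j)
  else B i j + max (B i k) 0 * B k j + B i k * max (-(B k j)) 0

/-- The data `(B_t, C_t, G_t, F_t)` attached to a vertex. -/
structure SeedData (ι R : Type) where
  B : Matrix ι ι R
  C : Matrix ι ι R
  G : Matrix ι ι R
  F : Matrix ι ι R

/-- One final-seed mutation step in direction `ℓ` (with initial exchange matrix `B0`). -/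
def seedStep (B0 : Matrix ι ι R) (s : SeedData ι R) (ℓ : ι) : SeedData ι R where
  B := mutate s.B ℓ
  C := s.C * (Jmat ℓ + rowSel ℓ (matPos s.B)) + colSel ℓ (matPos (-s.C)) * s.B
  G := s.G * (Jmat ℓ + colSel ℓ (matPos s.B)) - B0 * colSel ℓ (matPos s.C)
  F := s.F * Jmat ℓ + emax (colSel ℓ (matPos s.C) + s.F * colSel ℓ (matPos s.B))
      (colSel ℓ (matPos (-s.C)) + s.F * colSel ℓ (matPos (-s.B)))

/-- The seed data at the endpoint of the path `p` starting from the initial vertex. -/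
def seedOf (B0 : Matrix ι ι R) (p : List ι) : SeedData ι R :=
  p.foldl (seedStep B0) ⟨B0, 1, 1, 0⟩

/-- The exchange matrix `B_t` at the end of the path `p`. -/
def Bpath (B : Matrix ι ι R) (p : List ι) : Matrix ι ι R := (seedOf B p).B

/-- The `C`-matrix `C^{B;t_0}_t` at the end of the path `p`. -/
def Cmat (B : Matrix ι ι R) (p : List ι) : Matrix ι ι R := (seedOf B p).C

/-- The `G`-matrix `G^{B;t_0}_t` at the end of the path `p`. -/
def Gmat (B : Matrix ι ι R) (p : List ι) : Matrix ι ι R := (seedOf B p).G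

/-- The `F`-matrix `F^{B;t_0}_t` at the end of the path `p`. -/
def Fmat (B : Matrix ι ι R) (p : List ι) : Matrix ι ι R := (seedOf B p).F

/-- `B` is skew-symmetrizable: `DB` is skew-symmetric for some positive diagonal `D`. -/
def IsSkewSymmetrizable (B : Matrix ι ι ℤ) : Prop :=
  ∃ d : ι → ℤ, (∀ i, 0 < d i) ∧ (Matrix.diagonal d * B)ᵀ = -(Matrix.diagonal d * B)

/-- Column sign-coherence: every column is nonzero and has all entries of one sign. -/
def ColSignCoherent (A : Matrix ι ι ℤ) : Prop :=
  ∀ j, (∃ i, A i j ≠ 0) ∧ ((∀ i, 0 ≤ A i j) ∨ (∀ i, A i j ≤ 0))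

/-- Row sign-coherence: every row is nonzero and has all entries of one sign. -/
def RowSignCoherent (A : Matrix ι ι ℤ) : Prop :=
  ∀ i, (∃ j, A i j ≠ 0) ∧ ((∀ j, 0 ≤ A i j) ∨ (∀ j, A i j ≤ 0))

/-- `ε` is the column sign `ε_{•ℓ}(A)` of the (sign-coherent, nonzero) `ℓ`-th column of `A`. -/
def IsColSign (ε : ℤ) (A : Matrix ι ι ℤ) (ℓ : ι) : Prop :=
  (ε = 1 ∨ ε = -1) ∧ (∃ i, A i ℓ ≠ 0) ∧ ∀ i, 0 ≤ ε * A i ℓ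

/-- `ε` is the row sign `ε_{k•}(A)` of the (sign-coherent, nonzero) `k`-th row of `A`. -/
def IsRowSign (ε : ℤ) (A : Matrix ι ι ℤ) (k : ι) : Prop :=
  (ε = 1 ∨ ε = -1) ∧ (∃ j, A k j ≠ 0) ∧ ∀ j, 0 ≤ ε * A k j

/-- Sign-coherence of `C`-matrices: for every skew-symmetrizable initial integer matrix and
every path, the associated `C`-matrix is column sign-coherent. -/
def SignCoherenceOfC : Prop :=
  ∀ (κ : Type) [Fintype κ] [DecidableEq κ], ∀ B : Matrix κ κ ℤ,
    IsSkewSymmetrizable B → ∀ p : List κ, ColSignCoherent (Cmat B p)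

/-- The principal extension `B̄ = [[B, -I],[I, O]]` of `B`, on the index type `Fin n ⊕ Fin n`. -/
def pext {n : ℕ} (B : Matrix (Fin n) (Fin n) ℤ) :
    Matrix (Fin n ⊕ Fin n) (Fin n ⊕ Fin n) ℤ :=
  Matrix.fromBlocks B (-1) 1 0

noncomputable section FPolys

/-- The ambient field of rational functions `ℚ(y_i : i ∈ ι)` (fraction field of `ℤ[y_i]`). -/
abbrev FField (ι : Type) := FractionRing (MvPolynomial ι ℤ)

/-- The variable `y_i` inside the fraction field. -/
def yvar (i : ι) : FField ι := algebraMap (MvPolynomial ι ℤ) (FField ι) (MvPolynomial.X i)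

/-- One mutation step for the triple `(B_t, C_t, (F_{j;t})_j)`. -/
def fpolyStep (s : Matrix ι ι ℤ × Matrix ι ι ℤ × (ι → FField ι)) (ℓ : ι) :
    Matrix ι ι ℤ × Matrix ι ι ℤ × (ι → FField ι) :=
  ⟨mutate s.1 ℓ,
   s.2.1 * (Jmat ℓ + rowSel ℓ (matPos s.1)) + colSel ℓ (matPos (-s.2.1)) * s.1,
   fun j => if j = ℓ then
     (s.2.2 ℓ)⁻¹ *
       ((∏ i, yvar i ^ (max (s.2.1 i ℓ) 0).toNat) * (∏ i, s.2.2 i ^ (max (s.1 i ℓ) 0).toNat)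
        + (∏ i, yvar i ^ (max (-(s.2.1 i ℓ)) 0).toNat) *
            (∏ i, s.2.2 i ^ (max (-(s.1 i ℓ)) 0).toNat))
   else s.2.2 j⟩

/-- The `F`-polynomial `F^{B;t_0}_{j;t}` (as an element of the field of rational functions)
at the end of the path `p`. -/
def Fpoly (B : Matrix ι ι ℤ) (p : List ι) : ι → FField ι :=
  (p.foldl fpolyStep ⟨B, 1, fun _ => 1⟩).2.2

/-- The polynomial representing an element of the fraction field (when it is a polynomial). -/
def polyOf (x : FField ι) : MvPolynomial ι ℤ := by
  classical exact
    if h : ∃ q : MvPolynomial ι ℤ, algebraMap (MvPolynomial ι ℤ) (FField ι) q = x then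
      h.choose else 0

/-- The `H`-matrix `H^{B;t_0}_t`: `h_{ij;t}` is the minimum over exponent vectors `a` in the
support of `F^{B;t_0}_{j;t}` of `-a_i + ∑_{l ≠ i} [-b_{il}]₊ a_l`. -/
def Hmat (B : Matrix ι ι ℤ) (p : List ι) : Matrix ι ι ℤ := fun i j =>
  if h : (polyOf (Fpoly B p j)).support.Nonempty then
    (polyOf (Fpoly B p j)).support.inf' h
      (fun a => -(a i : ℤ) + ∑ l ∈ Finset.univ.erase i, max (-(B i l)) 0 * (a l : ℤ))
  else 0

end FPolys

/-- The embedding `ℚ(y_1,…,y_n) → ℚ(y_1,…,y_{2n})` sending `y_i` to `y_i`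
(the second batch of variables indexed by the right summand). -/
noncomputable def embK (n : ℕ) : FField (Fin n) →+* FField (Fin n ⊕ Fin n) :=
  IsFractionRing.lift
    (g := (algebraMap (MvPolynomial (Fin n ⊕ Fin n) ℤ) (FField (Fin n ⊕ Fin n))).comp
      (MvPolynomial.rename (Sum.inl : Fin n → Fin n ⊕ Fin n)).toRingHom)
    (by
      intro a b hab
      simp only [RingHom.coe_comp, Function.comp_apply, AlgHom.toRingHom_eq_coe,
        RingHom.coe_coe] at hab
      exact MvPolynomial.rename_injective _ Sum.inl_injective
        (IsFractionRing.injective (MvPolynomial (Fin n ⊕ Fin n) ℤ)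
          (FField (Fin n ⊕ Fin n)) hab))

/-- `D⁻¹ Cᵀ D` over `ℚ`, for the positive diagonal skew-symmetrizer `D = diagonal d`. -/
noncomputable def dCd {n : ℕ} (d : Fin n → ℤ) (C : Matrix (Fin n) (Fin n) ℤ) :
    Matrix (Fin n) (Fin n) ℚ :=
  (Matrix.diagonal fun i => (d i : ℚ))⁻¹ * (C.map (Int.cast : ℤ → ℚ))ᵀ *
    Matrix.diagonal fun i => (d i : ℚ)

end Defs
namespace CFBaux

section Aux
variable {ι : Type} [Fintype ι] [DecidableEq ι]

lemma pn (x : ℤ) : max x 0 - max (-x) 0 = x := by omega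

lemma mul_rowSel_apply (A X : Matrix ι ι ℤ) (ℓ i j : ι) :
    (A * rowSel ℓ X) i j = A i ℓ * X ℓ j := by
  simp [Matrix.mul_apply, rowSel, mul_ite]

lemma colSel_mul_apply (Y A : Matrix ι ι ℤ) (ℓ i j : ι) :
    (colSel ℓ Y * A) i j = Y i ℓ * A ℓ j := by
  simp [Matrix.mul_apply, colSel, ite_mul]

lemma mul_Jmat_apply (A : Matrix ι ι ℤ) (ℓ i j : ι) :
    (A * (Jmat ℓ : Matrix ι ι ℤ)) i j = if j = ℓ then -(A i j) else A i j := by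
  rw [show (Jmat ℓ : Matrix ι ι ℤ) = Matrix.diagonal fun i => if i = ℓ then -1 else 1 from rfl,
    Matrix.mul_diagonal]; split_ifs <;> ring

lemma mul_colSel_apply (A X : Matrix ι ι ℤ) (ℓ i j : ι) :
    (A * colSel ℓ X) i j = if j = ℓ then ∑ k, A i k * X k ℓ else 0 := by
  rw [Matrix.mul_apply]
  by_cases h : j = ℓ
  · subst h; simp [colSel]
  · simp [colSel, h]

lemma sum_if_split (g a : ι → ℤ) (ℓ : ι) :
    (∑ k, (if k = ℓ then a k else g k)) = (∑ k, g k) + (a ℓ - g ℓ) := by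
  have h : ∀ k, (if k = ℓ then a k else g k) = g k + (if k = ℓ then a k - g k else 0) := by
    intro k; split_ifs with h <;> ring
  simp_rw [h]
  rw [Finset.sum_add_distrib, Finset.sum_ite_eq' Finset.univ ℓ (fun k => a k - g k)]
  simp

end Aux

section Core
variable {ι : Type} [Fintype ι] [DecidableEq ι]

lemma core_step (B C F : Matrix ι ι ℤ) (ℓ : ι) (hdiag : B ℓ ℓ = 0) :
    (C + F * B) * (Jmat ℓ + rowSel ℓ (matPos (-B))) + colSel ℓ (matPos (-(C + F * B))) * (-B)
      = (C * (Jmat ℓ + rowSel ℓ (matPos B)) + colSel ℓ (matPos (-C)) * B)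
        + (F * Jmat ℓ + emax (colSel ℓ (matPos C) + F * colSel ℓ (matPos B))
            (colSel ℓ (matPos (-C)) + F * colSel ℓ (matPos (-B)))) * mutate B ℓ := by
  ext i j
  set S1 : ℤ := ∑ k, F i k * B k j with hS1
  set S2 : ℤ := ∑ k, F i k * max (B k ℓ) 0 with hS2
  set S3 : ℤ := ∑ k, F i k * max (-(B k ℓ)) 0 with hS3
  set S4 : ℤ := ∑ k, F i k * B k ℓ with hS4
  set M : ℤ := max (max (C i ℓ) 0 + S2) (max (-(C i ℓ)) 0 + S3) with hMdef
  have hS : S2 - S3 = S4 := by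
    rw [hS2, hS3, hS4, ← Finset.sum_sub_distrib]
    exact Finset.sum_congr rfl fun k _ => by rw [← mul_sub, pn]
  have hM : M = max (C i ℓ) 0 + S2 + max (-(C i ℓ + S4)) 0 := by omega
  -- entry of C + F * B
  have hCF : ∀ j', (C + F * B) i j' = C i j' + ∑ k, F i k * B k j' := by
    intro j'; rw [Matrix.add_apply, Matrix.mul_apply]
  -- LHS entry
  have L : (((C + F * B) * (Jmat ℓ + rowSel ℓ (matPos (-B)))
        + colSel ℓ (matPos (-(C + F * B))) * (-B) : Matrix ι ι ℤ)) i j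
      = (if j = ℓ then -(C i j + S1) else C i j + S1)
        + (C i ℓ + S4) * max (-(B ℓ j)) 0 + max (-(C i ℓ + S4)) 0 * (-(B ℓ j)) := by
    rw [Matrix.add_apply, mul_add, Matrix.add_apply, mul_Jmat_apply, mul_rowSel_apply,
      colSel_mul_apply, hCF j, hCF ℓ]
    simp [matPos, Matrix.mul_apply, hS1, hS4]
  -- RHS C-part entry
  have R1 : ((C * (Jmat ℓ + rowSel ℓ (matPos B)) + colSel ℓ (matPos (-C)) * B : Matrix ι ι ℤ)) i j
      = (if j = ℓ then -(C i j) else C i j)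
        + C i ℓ * max (B ℓ j) 0 + max (-(C i ℓ)) 0 * B ℓ j := by
    rw [Matrix.add_apply, mul_add, Matrix.add_apply, mul_Jmat_apply, mul_rowSel_apply,
      colSel_mul_apply]
    simp [matPos]
  -- Fnew entries
  have hFnew : ∀ k, ((F * Jmat ℓ + emax (colSel ℓ (matPos C) + F * colSel ℓ (matPos B))
        (colSel ℓ (matPos (-C)) + F * colSel ℓ (matPos (-B))) : Matrix ι ι ℤ)) i k
      = if k = ℓ then -(F i ℓ) + M else F i k := by
    intro k
    rw [Matrix.add_apply, mul_Jmat_apply]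
    by_cases h : k = ℓ
    · subst h
      simp [emax, mul_colSel_apply, colSel, matPos, hMdef, hS2, hS3]
    · simp [emax, mul_colSel_apply, colSel, matPos, h]
  -- F-part product entry
  have R2 : (((F * Jmat ℓ + emax (colSel ℓ (matPos C) + F * colSel ℓ (matPos B))
        (colSel ℓ (matPos (-C)) + F * colSel ℓ (matPos (-B)))) * mutate B ℓ : Matrix ι ι ℤ)) i j
      = (∑ k, F i k * mutate B ℓ k j)
        + ((-(F i ℓ) + M) * mutate B ℓ ℓ j - F i ℓ * mutate B ℓ ℓ j) := by
    rw [Matrix.mul_apply]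
    rw [Finset.sum_congr rfl fun k _ => by rw [hFnew k, ite_mul]]
    exact sum_if_split _ _ ℓ
  rw [L, Matrix.add_apply, R1, R2]
  by_cases hj : j = ℓ
  · subst hj
    have hSS : S1 = S4 := hS1.trans hS4.symm
    have hmut : ∀ k, mutate B j k j = -(B k j) := by
      intro k; simp [mutate]
    have hsum : (∑ k, F i k * mutate B j k j) = -S4 := by
      rw [hS4, ← Finset.sum_neg_distrib]
      exact Finset.sum_congr rfl fun k _ => by rw [hmut k, mul_neg]
    rw [hsum, hmut j, if_pos rfl, if_pos rfl, hdiag]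
    simp
    omega
  · have hmut : ∀ k, mutate B ℓ k j
        = if k = ℓ then -(B k j) else B k j + max (B k ℓ) 0 * B ℓ j + B k ℓ * max (-(B ℓ j)) 0 := by
      intro k; simp [mutate, hj]
    have hmutj : mutate B ℓ ℓ j = -(B ℓ j) := by simp [mutate]
    have hsum : (∑ k, F i k * mutate B ℓ k j)
        = S1 + S2 * B ℓ j + S4 * max (-(B ℓ j)) 0 - 2 * (F i ℓ * B ℓ j) := by
      have h1 : (∑ k, F i k * mutate B ℓ k j)
          = ∑ k, (if k = ℓ then F i k * (-(B k j))
              else F i k * (B k j + max (B k ℓ) 0 * B ℓ j + B k ℓ * max (-(B ℓ j)) 0)) :=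
        Finset.sum_congr rfl fun k _ => by rw [hmut k, mul_ite]
      rw [h1, sum_if_split]
      have h2 : (∑ k, F i k * (B k j + max (B k ℓ) 0 * B ℓ j + B k ℓ * max (-(B ℓ j)) 0))
          = S1 + S2 * B ℓ j + S4 * max (-(B ℓ j)) 0 := by
        rw [hS1, hS2, hS4, Finset.sum_mul, Finset.sum_mul, ← Finset.sum_add_distrib,
          ← Finset.sum_add_distrib]
        exact Finset.sum_congr rfl fun k _ => by ring
      rw [h2, hdiag]
      simp only [max_self, neg_zero, mul_zero, zero_mul, add_zero]
      ring
    rw [hsum, hmutj, if_neg hj, if_neg hj]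
    linear_combination (B ℓ j) * hM + (-(C i ℓ)) * pn (B ℓ j) + (B ℓ j) * pn (C i ℓ)

lemma mutate_neg (B : Matrix ι ι ℤ) (k : ι) : mutate (-B) k = -(mutate B k) := by
  ext i j
  simp only [mutate, Matrix.neg_apply, neg_neg]
  split_ifs with h
  · ring
  · linear_combination (B k j) * pn (B i k) - (B i k) * pn (B k j)

lemma skew_mutate (d : ι → ℤ) (hd : ∀ i, 0 < d i) (B : Matrix ι ι ℤ)
    (h : ∀ i j, d i * B i j = -(d j * B j i)) (k : ι) :
    ∀ i j, d i * mutate B k i j = -(d j * mutate B k j i) := by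
  intro i j
  by_cases hik : i = k
  · subst hik
    simp only [mutate, true_or, or_true, if_pos]
    linarith [h i j]
  · by_cases hjk : j = k
    · subst hjk
      simp only [mutate, true_or, or_true, if_pos]
      linarith [h i j]
    · simp only [mutate, hik, hjk, or_self, if_false, if_neg (by tauto : ¬(i = k ∨ j = k)),
        if_neg (by tauto : ¬(j = k ∨ i = k))]
      refine mul_left_cancel₀ (a := d k) (hd k).ne' ?_
      rcases le_or_gt (B i k) 0 with h1 | h1 <;> rcases le_or_gt (B k j) 0 with h2 | h2
      · have e1 : 0 ≤ B j k := by nlinarith [h k j, hd k, hd j]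
        have e2 : 0 ≤ B k i := by nlinarith [h i k, hd k, hd i]
        rw [max_eq_right h1, max_eq_left (by linarith : (0:ℤ) ≤ -(B k j)),
          max_eq_left e1, max_eq_right (by linarith : -(B k i) ≤ 0)]
        linear_combination (d k) * h i j + (-(d k * B k j)) * h i k + (d k * B k i) * h k j
      · have e1 : B j k ≤ 0 := by nlinarith [h k j, hd k, hd j]
        have e2 : 0 ≤ B k i := by nlinarith [h i k, hd k, hd i]
        rw [max_eq_right h1, max_eq_right (by linarith : -(B k j) ≤ 0),
          max_eq_right e1, max_eq_right (by linarith : -(B k i) ≤ 0)]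
        linear_combination (d k) * h i j
      · have e1 : 0 ≤ B j k := by nlinarith [h k j, hd k, hd j]
        have e2 : B k i ≤ 0 := by nlinarith [h i k, hd k, hd i]
        rw [max_eq_left h1.le, max_eq_left (by linarith : (0:ℤ) ≤ -(B k j)),
          max_eq_left e1, max_eq_left (by linarith : (0:ℤ) ≤ -(B k i))]
        linear_combination (d k) * h i j
      · have e1 : B j k ≤ 0 := by nlinarith [h k j, hd k, hd j]
        have e2 : B k i ≤ 0 := by nlinarith [h i k, hd k, hd i]
        rw [max_eq_left h1.le, max_eq_right (by linarith : -(B k j) ≤ 0),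
          max_eq_right e1, max_eq_left (by linarith : (0:ℤ) ≤ -(B k i))]
        linear_combination (d k) * h i j + (d k * B k j) * h i k + (-(d k * B k i)) * h k j

end Core

end CFBaux

section MainProof
open CFBaux
variable {ι : Type} [Fintype ι] [DecidableEq ι]

lemma CFBaux.seedOf_append (B0 : Matrix ι ι ℤ) (l : List ι) (a : ι) :
    seedOf B0 (l ++ [a]) = seedStep B0 (seedOf B0 l) a := by
  simp [seedOf, List.foldl_append]

lemma CFBaux.key (d : ι → ℤ) (hd : ∀ i, 0 < d i) (B0 : Matrix ι ι ℤ)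
    (h0 : ∀ i j, d i * B0 i j = -(d j * B0 j i)) (p : List ι) :
    (seedOf (-B0) p).B = -((seedOf B0 p).B)
    ∧ (∀ i j, d i * (seedOf B0 p).B i j = -(d j * (seedOf B0 p).B j i))
    ∧ (seedOf (-B0) p).C = (seedOf B0 p).C + (seedOf B0 p).F * (seedOf B0 p).B := by
  induction p using List.reverseRecOn with
  | nil => exact ⟨rfl, h0, by simp [seedOf]⟩
  | append_singleton l a ih =>
    obtain ⟨ih1, ih2, ih3⟩ := ih
    rw [seedOf_append, seedOf_append]
    refine ⟨?_, skew_mutate d hd _ ih2 a, ?_⟩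
    · show mutate (seedOf (-B0) l).B a = -(mutate (seedOf B0 l).B a)
      rw [ih1, mutate_neg]
    · have hdiag : (seedOf B0 l).B a a = 0 := by
        have h2 := ih2 a a
        have h3 : d a * (seedOf B0 l).B a a = 0 := by linarith
        exact (mul_eq_zero.mp h3).resolve_left (hd a).ne'
      show (seedOf (-B0) l).C * (Jmat a + rowSel a (matPos (seedOf (-B0) l).B))
            + colSel a (matPos (-(seedOf (-B0) l).C)) * (seedOf (-B0) l).B
          = ((seedOf B0 l).C * (Jmat a + rowSel a (matPos (seedOf B0 l).B))
              + colSel a (matPos (-(seedOf B0 l).C)) * (seedOf B0 l).B)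
            + ((seedOf B0 l).F * Jmat a
              + emax (colSel a (matPos (seedOf B0 l).C)
                  + (seedOf B0 l).F * colSel a (matPos (seedOf B0 l).B))
                (colSel a (matPos (-(seedOf B0 l).C))
                  + (seedOf B0 l).F * colSel a (matPos (-(seedOf B0 l).B))))
              * mutate (seedOf B0 l).B a
      rw [ih1, ih3]
      exact core_step _ _ _ a hdiag

end MainProof

/-- `C^{-B;t_0}_t = C^{B;t_0}_t + F^{B;t_0}_t · B_t`. -/
theorem Cmat_neg_eq_Cmat_add_Fmat_mul_Bpath {n : ℕ} (B : Matrix (Fin n) (Fin n) ℤ)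
    (hB : IsSkewSymmetrizable B) (p : List (Fin n)) :
    Cmat (-B) p = Cmat B p + Fmat B p * Bpath B p := by
  obtain ⟨d, hd, hsk⟩ := hB
  have h0 : ∀ i j, d i * B i j = -(d j * B j i) := by
    intro i j
    have h' := congrFun (congrFun hsk j) i
    simp only [Matrix.transpose_apply, Matrix.neg_apply, Matrix.diagonal_mul] at h'
    exact h'
  exact (CFBaux.key d hd B h0 p).2.2
end

section
/- Let B be a skew-symmetrizable n×n integer matrix and let t be a vertex reached from the initial vertex t_0 by a path (i_1,…,i_m). Then G^{−B;t_0}_t = G^{B;t_0}_t + B · F^{B;t_0}_t, where G^{−B;t_0}_t denotes the G-matrix for the initial matrix −B along the same path. -/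
open Matrix

/-! ### Auxiliary development for the proof -/

namespace GmatNegAux

variable {ι : Type} [Fintype ι] [DecidableEq ι]

lemma mul_Jmat_apply (M : Matrix ι ι ℤ) (ℓ i j : ι) :
    (M * (Jmat ℓ : Matrix ι ι ℤ)) i j = if j = ℓ then -(M i j) else M i j := by
  rw [Jmat, Matrix.mul_diagonal]
  split_ifs <;> ring

lemma mul_rowSel_apply (M X : Matrix ι ι ℤ) (ℓ i j : ι) :
    (M * rowSel ℓ X) i j = M i ℓ * X ℓ j := by
  rw [Matrix.mul_apply]
  rw [Finset.sum_eq_single ℓ]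
  · simp [rowSel]
  · intro k _ hk; simp [rowSel, hk]
  · simp

lemma colSel_mul_apply (X M : Matrix ι ι ℤ) (ℓ i j : ι) :
    (colSel ℓ X * M) i j = X i ℓ * M ℓ j := by
  rw [Matrix.mul_apply]
  rw [Finset.sum_eq_single ℓ]
  · simp [colSel]
  · intro k _ hk; simp [colSel, hk]
  · simp

lemma mul_colSel_apply (M X : Matrix ι ι ℤ) (ℓ i j : ι) :
    (M * colSel ℓ X) i j = if j = ℓ then ∑ k, M i k * X k ℓ else 0 := by
  rw [Matrix.mul_apply]
  split_ifs with h
  · subst h; simp [colSel]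
  · simp [colSel, h]

/-- `mutate` commutes with negation. -/
lemma mutate_neg (Bt : Matrix ι ι ℤ) (ℓ : ι) : mutate (-Bt) ℓ = -(mutate Bt ℓ) := by
  funext i j
  simp only [mutate, Matrix.neg_apply, neg_neg]
  split_ifs with h
  · ring
  · have h1 : max (-(Bt i ℓ)) 0 = max (Bt i ℓ) 0 - Bt i ℓ := by omega
    have h2 : max (Bt ℓ j) 0 = max (-(Bt ℓ j)) 0 + Bt ℓ j := by omega
    rw [h1, h2]; ring

/-- `mutate` preserves the skew-symmetrizer. -/
lemma mutate_skew {d : ι → ℤ} (hd : ∀ i, 0 < d i) {Bt : Matrix ι ι ℤ}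
    (hsk : ∀ i j, d i * Bt i j = -(d j * Bt j i)) (ℓ : ι) :
    ∀ i j, d i * mutate Bt ℓ i j = -(d j * mutate Bt ℓ j i) := by
  intro i j
  have key : ∀ a b : ι, d a * max (Bt a b) 0 = d b * max (-(Bt b a)) 0 := by
    intro a b
    have h1 : d a * max (Bt a b) 0 = max (d a * Bt a b) 0 := by
      rcases le_total (Bt a b) 0 with h | h
      · rw [max_eq_right h, max_eq_right] <;> nlinarith [hd a]
      · rw [max_eq_left h, max_eq_left] <;> nlinarith [hd a]
    have h2 : d b * max (-(Bt b a)) 0 = max (d b * (-(Bt b a))) 0 := by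
      rcases le_total (-(Bt b a)) 0 with h | h
      · rw [max_eq_right h, max_eq_right] <;> nlinarith [hd b]
      · rw [max_eq_left h, max_eq_left] <;> nlinarith [hd b]
    rw [h1, h2, hsk a b]; ring_nf
  simp only [mutate]
  have hsym : (j = ℓ ∨ i = ℓ) = (i = ℓ ∨ j = ℓ) := by
    apply propext; constructor <;> exact Or.symm
  by_cases h : i = ℓ ∨ j = ℓ
  · rw [if_pos h, if_pos (Or.symm h)]
    have := hsk i j; linarith
  · rw [if_neg h, if_neg (fun hc => h (Or.symm hc))]
    have k1 := key i ℓ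
    have k2 := key j ℓ
    have h2 := hsk i ℓ
    have h3 := hsk j ℓ
    have h1 := hsk i j
    linear_combination h1 + Bt ℓ j * k1 + max (-(Bt ℓ j)) 0 * h2 + Bt ℓ i * k2 +
      max (-(Bt ℓ i)) 0 * h3

/-- diagonal entries vanish. -/
lemma diag_zero {d : ι → ℤ} (hd : ∀ i, 0 < d i) {Bt : Matrix ι ι ℤ}
    (hsk : ∀ i j, d i * Bt i j = -(d j * Bt j i)) (i : ι) : Bt i i = 0 := by
  have := hsk i i
  have hdi := hd i
  nlinarith

/-- G-step invariance. -/
lemma step_G (B Bt C G F : Matrix ι ι ℤ) (ℓ : ι) (hGB : G * Bt = B * C) :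
    (seedStep (-B) (⟨-Bt, C + F * Bt, G + B * F, F⟩ : SeedData ι ℤ) ℓ).G
      = (seedStep B (⟨Bt, C, G, F⟩ : SeedData ι ℤ) ℓ).G
        + B * (seedStep B (⟨Bt, C, G, F⟩ : SeedData ι ℤ) ℓ).F := by
  have hFB : ∀ a b : ι, (F * Bt) a b = ∑ k, F a k * Bt k b := fun a b => Matrix.mul_apply
  have hBF : ∀ a b : ι, (B * F) a b = ∑ k, B a k * F k b := fun a b => Matrix.mul_apply
  simp only [seedStep]
  funext i j
  by_cases hj : j = ℓ
  · subst hj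
    simp only [Matrix.mul_add, Matrix.add_apply, Matrix.sub_apply, mul_Jmat_apply,
      mul_colSel_apply, if_pos rfl, if_true, ite_true, eq_self_iff_true, matPos,
      Matrix.neg_apply, hFB, hBF]
    have hbig1 : (B * (F * (Jmat j : Matrix ι ι ℤ))) i j = ∑ k, -(B i k * F k j) := by
      rw [Matrix.mul_apply]
      refine Finset.sum_congr rfl fun k _ => ?_
      rw [mul_Jmat_apply, if_pos rfl]; ring
    have hbig2 : (B * emax (colSel j (matPos C) + F * colSel j (matPos Bt))
              (colSel j (matPos (-C)) + F * colSel j (matPos (-Bt)))) i j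
        = (∑ k, B i k * max (C k j + ∑ m, F k m * Bt m j) 0)
            + ((∑ k, B i k * max (-(C k j)) 0)
            + ∑ k, B i k * (∑ m, F k m * max (-(Bt m j)) 0)) := by
      rw [Matrix.mul_apply]
      have hper : ∀ k ∈ Finset.univ, B i k * emax (colSel j (matPos C) + F * colSel j (matPos Bt))
              (colSel j (matPos (-C)) + F * colSel j (matPos (-Bt))) k j
          = B i k * max (C k j + ∑ m, F k m * Bt m j) 0
              + (B i k * max (-(C k j)) 0
              + B i k * (∑ m, F k m * max (-(Bt m j)) 0)) := by
        intro k _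
        simp only [Matrix.add_apply, if_pos rfl, if_true, ite_true,
          eq_self_iff_true, emax, colSel, matPos, Matrix.neg_apply, mul_colSel_apply]
        have huvk : (∑ m, F k m * max (Bt m j) 0)
            = (∑ m, F k m * max (-(Bt m j)) 0) + ∑ m, F k m * Bt m j := by
          rw [← Finset.sum_add_distrib]
          refine Finset.sum_congr rfl fun m _ => ?_
          have : max (Bt m j) 0 = max (-(Bt m j)) 0 + Bt m j := by omega
          rw [this]; ring
        have hM : max (max (C k j) 0 + ∑ m, F k m * max (Bt m j) 0)
              (max (-(C k j)) 0 + ∑ m, F k m * max (-(Bt m j)) 0)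
            = max (C k j + ∑ m, F k m * Bt m j) 0 + max (-(C k j)) 0
              + ∑ m, F k m * max (-(Bt m j)) 0 := by omega
        rw [hM]; ring
      rw [Finset.sum_congr rfl hper, Finset.sum_add_distrib, Finset.sum_add_distrib]
    rw [hbig1, hbig2]
    have hsplit : (∑ k, (G i k + ∑ m, B i m * F m k) * max (-(Bt k j)) 0)
        = (∑ k, G i k * max (-(Bt k j)) 0)
          + ∑ k, (∑ m, B i m * F m k) * max (-(Bt k j)) 0 := by
      rw [← Finset.sum_add_distrib]
      exact Finset.sum_congr rfl fun k _ => by ring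
    have hswap : (∑ k, (∑ m, B i m * F m k) * max (-(Bt k j)) 0)
        = ∑ m, B i m * (∑ k, F m k * max (-(Bt k j)) 0) := by
      calc (∑ k, (∑ m, B i m * F m k) * max (-(Bt k j)) 0)
          = ∑ k, ∑ m, B i m * (F m k * max (-(Bt k j)) 0) := by
            refine Finset.sum_congr rfl fun k _ => ?_
            rw [Finset.sum_mul]
            exact Finset.sum_congr rfl fun m _ => by ring
        _ = ∑ m, ∑ k, B i m * (F m k * max (-(Bt k j)) 0) := Finset.sum_comm
        _ = ∑ m, B i m * (∑ k, F m k * max (-(Bt k j)) 0) := by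
            refine Finset.sum_congr rfl fun m _ => ?_
            rw [Finset.mul_sum]
    have hGsum : (∑ k, G i k * max (-(Bt k j)) 0)
        = (∑ k, G i k * max (Bt k j) 0) - ∑ k, G i k * Bt k j := by
      rw [← Finset.sum_sub_distrib]
      refine Finset.sum_congr rfl fun k _ => ?_
      have : max (-(Bt k j)) 0 = max (Bt k j) 0 - Bt k j := by omega
      rw [this]; ring
    have hGBe : (∑ k, G i k * Bt k j) = ∑ k, B i k * C k j := by
      have := congrFun (congrFun hGB i) j
      simpa [Matrix.mul_apply] using this
    have hCsum : (∑ k, B i k * max (C k j) 0)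
        = (∑ k, B i k * max (-(C k j)) 0) + ∑ k, B i k * C k j := by
      rw [← Finset.sum_add_distrib]
      refine Finset.sum_congr rfl fun k _ => ?_
      have : max (C k j) 0 = max (-(C k j)) 0 + C k j := by omega
      rw [this]; ring
    have hneg : (∑ k, -B i k * max (C k j + ∑ m, F k m * Bt m j) 0)
        = -∑ k, B i k * max (C k j + ∑ m, F k m * Bt m j) 0 := by
      rw [← Finset.sum_neg_distrib]
      exact Finset.sum_congr rfl fun k _ => by ring
    have hnegF : (∑ k, -(B i k * F k j)) = -∑ k, B i k * F k j := Finset.sum_neg_distrib _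
    rw [hsplit, hswap, hGsum, hGBe, hnegF]
    linarith [hCsum, hneg]
  · simp only [Matrix.mul_add, Matrix.add_apply, Matrix.sub_apply, mul_Jmat_apply,
      mul_colSel_apply, if_neg hj, hBF]
    have hbig1 : (B * (F * (Jmat ℓ : Matrix ι ι ℤ))) i j = ∑ k, B i k * F k j := by
      rw [Matrix.mul_apply]
      refine Finset.sum_congr rfl fun k _ => ?_
      rw [mul_Jmat_apply, if_neg hj]
    have hbig2 : (B * emax (colSel ℓ (matPos C) + F * colSel ℓ (matPos Bt))
              (colSel ℓ (matPos (-C)) + F * colSel ℓ (matPos (-Bt)))) i j = 0 := by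
      rw [Matrix.mul_apply]
      rw [Finset.sum_eq_zero]
      intro k _
      simp only [Matrix.add_apply, emax, colSel, matPos, Matrix.neg_apply,
        mul_colSel_apply, if_neg hj, max_self]
      ring
    rw [hbig1, hbig2]
    ring

/-- GB-invariant step. -/
lemma step_GB (B Bt C G F : Matrix ι ι ℤ) (ℓ : ι) (hll : Bt ℓ ℓ = 0)
    (hGB : G * Bt = B * C) :
    (seedStep B (⟨Bt, C, G, F⟩ : SeedData ι ℤ) ℓ).G
        * (seedStep B (⟨Bt, C, G, F⟩ : SeedData ι ℤ) ℓ).B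
      = B * (seedStep B (⟨Bt, C, G, F⟩ : SeedData ι ℤ) ℓ).C := by
  simp only [seedStep]
  funext i j
  rw [Matrix.mul_apply, Matrix.mul_apply]
  by_cases hj : j = ℓ
  · subst hj
    have h1 : ∀ k ∈ Finset.univ, (G * ((Jmat j : Matrix ι ι ℤ) + colSel j (matPos Bt))
          - B * colSel j (matPos C)) i k * mutate Bt j k j = -(G i k * Bt k j) := by
      intro k _
      have hm : mutate Bt j k j = -(Bt k j) := by simp [mutate]
      rw [hm]
      by_cases hk : k = j
      · subst hk; rw [hll]; ring
      · simp only [Matrix.mul_add, Matrix.add_apply, Matrix.sub_apply, mul_Jmat_apply,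
          mul_colSel_apply, if_neg hk, matPos]
        ring
    have h2 : ∀ k ∈ Finset.univ, B i k * (C * ((Jmat j : Matrix ι ι ℤ)
            + rowSel j (matPos Bt)) + colSel j (matPos (-C)) * Bt) k j
          = -(B i k * C k j) := by
      intro k _
      simp only [Matrix.mul_add, Matrix.add_apply, mul_Jmat_apply, if_pos rfl, if_true,
        ite_true, eq_self_iff_true, mul_rowSel_apply, colSel_mul_apply, matPos,
        Matrix.neg_apply, hll, max_self, neg_zero]
      ring
    rw [Finset.sum_congr rfl h1, Finset.sum_congr rfl h2, Finset.sum_neg_distrib,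
      Finset.sum_neg_distrib]
    have hGBe : (∑ k, G i k * Bt k j) = ∑ k, B i k * C k j := by
      have := congrFun (congrFun hGB i) j
      simpa [Matrix.mul_apply] using this
    rw [hGBe]
  · have h1 : ∀ k ∈ Finset.univ, (G * ((Jmat ℓ : Matrix ι ι ℤ) + colSel ℓ (matPos Bt))
          - B * colSel ℓ (matPos C)) i k * mutate Bt ℓ k j
        = G i k * Bt k j + (G i k * max (Bt k ℓ) 0) * Bt ℓ j
          + (G i k * Bt k ℓ) * max (-(Bt ℓ j)) 0
          + (if k = ℓ then ((-(G i ℓ) + (∑ m, G i m * max (Bt m ℓ) 0)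
              - ∑ m, B i m * max (C m ℓ) 0) * (-(Bt ℓ j)) - G i ℓ * Bt ℓ j) else 0) := by
      intro k _
      simp only [Matrix.mul_add, Matrix.add_apply, Matrix.sub_apply, mul_Jmat_apply,
        mul_colSel_apply, matPos]
      by_cases hk : k = ℓ
      · subst hk
        have hm : mutate Bt k k j = -(Bt k j) := by simp [mutate]
        rw [hm]
        simp only [if_pos rfl, hll, if_true, ite_true, eq_self_iff_true, max_self]
        ring
      · have hm : mutate Bt ℓ k j = Bt k j + max (Bt k ℓ) 0 * Bt ℓ j
            + Bt k ℓ * max (-(Bt ℓ j)) 0 := by simp [mutate, hk, hj]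
        rw [hm]
        simp only [if_neg hk]
        ring
    have h2 : ∀ k ∈ Finset.univ, B i k * (C * ((Jmat ℓ : Matrix ι ι ℤ)
            + rowSel ℓ (matPos Bt)) + colSel ℓ (matPos (-C)) * Bt) k j
        = B i k * C k j + (B i k * C k ℓ) * max (Bt ℓ j) 0
          + (B i k * max (-(C k ℓ)) 0) * Bt ℓ j := by
      intro k _
      simp only [Matrix.mul_add, Matrix.add_apply, mul_Jmat_apply, if_neg hj,
        mul_rowSel_apply, colSel_mul_apply, matPos, Matrix.neg_apply]
      ring
    rw [Finset.sum_congr rfl h1, Finset.sum_congr rfl h2]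
    simp only [Finset.sum_add_distrib, Finset.sum_ite_eq' Finset.univ ℓ, Finset.mem_univ,
      if_pos]
    rw [← Finset.sum_mul, ← Finset.sum_mul, ← Finset.sum_mul, ← Finset.sum_mul]
    have hGBj : (∑ k, G i k * Bt k j) = ∑ k, B i k * C k j := by
      have := congrFun (congrFun hGB i) j
      simpa [Matrix.mul_apply] using this
    have hGBl : (∑ k, G i k * Bt k ℓ) = ∑ k, B i k * C k ℓ := by
      have := congrFun (congrFun hGB i) ℓ
      simpa [Matrix.mul_apply] using this
    have hCsum : (∑ m, B i m * max (C m ℓ) 0)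
        = (∑ m, B i m * max (-(C m ℓ)) 0) + ∑ m, B i m * C m ℓ := by
      rw [← Finset.sum_add_distrib]
      refine Finset.sum_congr rfl fun k _ => ?_
      have : max (C k ℓ) 0 = max (-(C k ℓ)) 0 + C k ℓ := by omega
      rw [this]; ring
    have hb : max (Bt ℓ j) 0 = max (-(Bt ℓ j)) 0 + Bt ℓ j := by omega
    rw [hb]
    linear_combination hGBj + max (-(Bt ℓ j)) 0 * hGBl + Bt ℓ j * hCsum

end GmatNegAux

namespace GmatNegAux

set_option linter.unusedSectionVars false

variable {ι : Type} [Fintype ι] [DecidableEq ι]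

lemma keyC (b c f u v g : ℤ) (h : u = v + f) :
    (c + f) * max (-b) 0 + max (-(c + f)) 0 * (-b)
      = c * max b 0 + max (-c) 0 * b + u * b + f * max (-b) 0
        + ((-g + max (max c 0 + u) (max (-c) 0 + v)) * (-b) - g * b) := by
  have h3 : max (max c 0 + u) (max (-c) 0 + v) = v + max (c + f) 0 + max (-c) 0 := by omega
  have h1 : max b 0 = max (-b) 0 + b := by omega
  have h2 : max (c + f) 0 = max (-(c + f)) 0 + (c + f) := by omega
  rw [h3, h1, h2]; subst h; ring

/-- F-step invariance. -/
lemma step_F (B Bt C G F G2 : Matrix ι ι ℤ) (ℓ : ι) :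
    (seedStep (-B) (⟨-Bt, C + F * Bt, G2, F⟩ : SeedData ι ℤ) ℓ).F
      = (seedStep B (⟨Bt, C, G, F⟩ : SeedData ι ℤ) ℓ).F := by
  have hFB : ∀ a b : ι, (F * Bt) a b = ∑ k, F a k * Bt k b := fun a b => Matrix.mul_apply
  simp only [seedStep]
  funext i j
  by_cases hj : j = ℓ
  · subst hj
    simp only [Matrix.add_apply, mul_Jmat_apply, emax, colSel, matPos,
      Matrix.neg_apply, mul_colSel_apply, neg_neg, if_pos rfl, if_true, ite_true, eq_self_iff_true, hFB]
    have huv : (∑ k, F i k * max (Bt k j) 0) = (∑ k, F i k * max (-(Bt k j)) 0)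
        + ∑ k, F i k * Bt k j := by
      rw [← Finset.sum_add_distrib]
      refine Finset.sum_congr rfl fun k _ => ?_
      have : max (Bt k j) 0 = max (-(Bt k j)) 0 + Bt k j := by omega
      rw [this]; ring
    omega
  · simp only [Matrix.add_apply, mul_Jmat_apply, emax, colSel, matPos,
      Matrix.neg_apply, mul_colSel_apply, neg_neg, if_neg hj, hFB]

/-- C-step invariance. -/
lemma step_C (B Bt C G F G2 : Matrix ι ι ℤ) (ℓ : ι) (hll : Bt ℓ ℓ = 0) :
    (seedStep (-B) (⟨-Bt, C + F * Bt, G2, F⟩ : SeedData ι ℤ) ℓ).C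
      = (seedStep B (⟨Bt, C, G, F⟩ : SeedData ι ℤ) ℓ).C
        + (seedStep B (⟨Bt, C, G, F⟩ : SeedData ι ℤ) ℓ).F
          * (seedStep B (⟨Bt, C, G, F⟩ : SeedData ι ℤ) ℓ).B := by
  have hFB : ∀ a b : ι, (F * Bt) a b = ∑ k, F a k * Bt k b := fun a b => Matrix.mul_apply
  simp only [seedStep]
  funext i j
  simp only [Matrix.mul_add, Matrix.add_apply, mul_Jmat_apply, mul_rowSel_apply,
    colSel_mul_apply, matPos, Matrix.neg_apply, hFB]
  rw [Matrix.mul_apply]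
  by_cases hj : j = ℓ
  · subst hj
    simp only [if_pos rfl, hll, if_true, ite_true, eq_self_iff_true, max_self]
    have hsum : (∑ k, ((F * (Jmat j : Matrix ι ι ℤ)) + emax (colSel j (matPos C) + F * colSel j (matPos Bt))
              (colSel j (matPos (-C)) + F * colSel j (matPos (-Bt)))) i k * mutate Bt j k j)
        = ∑ k, -(F i k * Bt k j) := by
      refine Finset.sum_congr rfl fun k _ => ?_
      have hm : mutate Bt j k j = -(Bt k j) := by simp [mutate]
      rw [hm]
      by_cases hk : k = j
      · subst hk; rw [hll]; ring
      · simp only [Matrix.add_apply, mul_Jmat_apply, emax, colSel, matPos,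
          Matrix.neg_apply, mul_colSel_apply, if_neg hk, max_self]
        ring
    rw [hsum, Finset.sum_neg_distrib]
    simp only [neg_zero, max_self, mul_zero, zero_mul]
    ring
  · simp only [if_neg hj]
    have hsum : (∑ k, ((F * (Jmat ℓ : Matrix ι ι ℤ)) + emax (colSel ℓ (matPos C) + F * colSel ℓ (matPos Bt))
              (colSel ℓ (matPos (-C)) + F * colSel ℓ (matPos (-Bt)))) i k * mutate Bt ℓ k j)
        = ∑ k, ((F i k * Bt k j) + (F i k * max (Bt k ℓ) 0) * Bt ℓ j
            + (F i k * Bt k ℓ) * max (-(Bt ℓ j)) 0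
            + (if k = ℓ then
                ((-(F i ℓ) + max (max (C i ℓ) 0 + ∑ m, F i m * max (Bt m ℓ) 0)
                    (max (-(C i ℓ)) 0 + ∑ m, F i m * max (-(Bt m ℓ)) 0)) * (-(Bt ℓ j))
                  - F i ℓ * Bt ℓ j) else 0)) := by
      refine Finset.sum_congr rfl fun k _ => ?_
      simp only [Matrix.add_apply, mul_Jmat_apply, emax, colSel, matPos, Matrix.neg_apply,
        mul_colSel_apply]
      by_cases hk : k = ℓ
      · subst hk
        have hm : mutate Bt k k j = -(Bt k j) := by simp [mutate]
        rw [hm]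
        simp only [if_pos rfl, hll, if_true, ite_true, eq_self_iff_true, max_self]
        ring
      · have hm : mutate Bt ℓ k j = Bt k j + max (Bt k ℓ) 0 * Bt ℓ j
            + Bt k ℓ * max (-(Bt ℓ j)) 0 := by simp [mutate, hk, hj]
        rw [hm]
        simp only [if_neg hk, max_self, zero_mul, mul_zero]
        ring
    rw [hsum]
    simp only [Finset.sum_add_distrib, Finset.sum_ite_eq' Finset.univ ℓ, Finset.mem_univ,
      if_pos]
    rw [← Finset.sum_mul, ← Finset.sum_mul]
    have huv : (∑ m, F i m * max (Bt m ℓ) 0) = (∑ m, F i m * max (-(Bt m ℓ)) 0)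
        + ∑ m, F i m * Bt m ℓ := by
      rw [← Finset.sum_add_distrib]
      refine Finset.sum_congr rfl fun k _ => ?_
      have : max (Bt k ℓ) 0 = max (-(Bt k ℓ)) 0 + Bt k ℓ := by omega
      rw [this]; ring
    linear_combination keyC (Bt ℓ j) (C i ℓ) (∑ m, F i m * Bt m ℓ)
      (∑ m, F i m * max (Bt m ℓ) 0) (∑ m, F i m * max (-(Bt m ℓ)) 0) (F i ℓ) huv

/-- The full invariant between the seeds for `B` and `-B`. -/
def InvP (B : Matrix ι ι ℤ) (d : ι → ℤ) (s s2 : SeedData ι ℤ) : Prop :=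
  (∀ i j, d i * s.B i j = -(d j * s.B j i)) ∧ s2.B = -s.B ∧ s2.C = s.C + s.F * s.B ∧
    s2.G = s.G + B * s.F ∧ s2.F = s.F ∧ s.G * s.B = B * s.C

lemma inv_step (B : Matrix ι ι ℤ) (d : ι → ℤ) (hd : ∀ i, 0 < d i) (s s2 : SeedData ι ℤ)
    (h : InvP B d s s2) (ℓ : ι) : InvP B d (seedStep B s ℓ) (seedStep (-B) s2 ℓ) := by
  obtain ⟨hsk, hB2, hC2, hG2, hF2, hGB⟩ := h
  obtain ⟨Bt, C, G, F⟩ := s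
  obtain ⟨B2, C2, G2', F2⟩ := s2
  dsimp only at hsk hB2 hC2 hG2 hF2 hGB ⊢
  rw [hB2, hC2, hG2, hF2]
  have hll : Bt ℓ ℓ = 0 := diag_zero hd hsk ℓ
  refine ⟨?_, ?_, ?_, ?_, ?_, ?_⟩
  · show ∀ i j, d i * mutate Bt ℓ i j = -(d j * mutate Bt ℓ j i)
    exact mutate_skew hd hsk ℓ
  · show mutate (-Bt) ℓ = -(mutate Bt ℓ)
    exact mutate_neg Bt ℓ
  · exact step_C B Bt C G F (G + B * F) ℓ hll
  · exact step_G B Bt C G F ℓ hGB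
  · exact step_F B Bt C G F (G + B * F) ℓ
  · exact step_GB B Bt C G F ℓ hll hGB

lemma inv_fold (B : Matrix ι ι ℤ) (d : ι → ℤ) (hd : ∀ i, 0 < d i) (p : List ι) :
    ∀ s s2 : SeedData ι ℤ, InvP B d s s2 →
      InvP B d (p.foldl (seedStep B) s) (p.foldl (seedStep (-B)) s2) := by
  induction p with
  | nil => intro s s2 h; exact h
  | cons ℓ p ih => intro s s2 h; exact ih _ _ (inv_step B d hd s s2 h ℓ)

end GmatNegAux


/-- `G^{-B;t_0}_t = G^{B;t_0}_t + B · F^{B;t_0}_t`. -/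
theorem Gmat_neg_eq_Gmat_add_B_mul_Fmat {n : ℕ} (B : Matrix (Fin n) (Fin n) ℤ)
    (hB : IsSkewSymmetrizable B) (p : List (Fin n)) :
    Gmat (-B) p = Gmat B p + B * Fmat B p := by
  obtain ⟨d, hd, hskewM⟩ := hB
  have hsk : ∀ i j, d i * B i j = -(d j * B j i) := by
    intro i j
    have h1 := congrFun (congrFun hskewM j) i
    simp only [Matrix.transpose_apply, Matrix.diagonal_mul, Matrix.neg_apply] at h1
    linarith
  have base : GmatNegAux.InvP B d ⟨B, 1, 1, 0⟩ ⟨-B, 1, 1, 0⟩ := by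
    exact ⟨hsk, rfl, by simp, by simp, rfl, by simp⟩
  have h := GmatNegAux.inv_fold B d hd p _ _ base
  exact h.2.2.2.1
end

section
/- Let B be a skew-symmetrizable n×n integer matrix and let t be a vertex reached from the initial vertex t_0 by a path (i_1,…,i_m). Then F^{−B;t_0}_t = F^{B;t_0}_t, where F^{−B;t_0}_t denotes the F-matrix for the initial matrix −B along the same path. -/
open Matrix

section NegAux

set_option linter.unusedSectionVars false

variable {ι : Type} [Fintype ι] [DecidableEq ι]

lemma mulJ_apply (C : Matrix ι ι ℤ) (ℓ i j : ι) :
    (C * (Jmat ℓ : Matrix ι ι ℤ)) i j = if j = ℓ then -(C i j) else C i j := by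
  rw [Jmat, Matrix.mul_diagonal]
  split <;> ring

lemma mul_rowSel_apply (C X : Matrix ι ι ℤ) (ℓ i j : ι) :
    (C * rowSel ℓ X) i j = C i ℓ * X ℓ j := by
  simp only [Matrix.mul_apply, rowSel, mul_ite, mul_zero]
  rw [Finset.sum_ite_eq' Finset.univ ℓ (fun k => C i k * X k j)]
  simp

lemma colSel_mul_apply (X B : Matrix ι ι ℤ) (ℓ i j : ι) :
    (colSel ℓ X * B) i j = X i ℓ * B ℓ j := by
  simp only [Matrix.mul_apply, colSel, ite_mul, zero_mul]
  rw [Finset.sum_ite_eq' Finset.univ ℓ (fun k => X i k * B k j)]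
  simp

lemma mul_colSel_apply (F X : Matrix ι ι ℤ) (ℓ i j : ι) :
    (F * colSel ℓ X) i j = if j = ℓ then ∑ k, F i k * X k ℓ else 0 := by
  simp only [Matrix.mul_apply, colSel]
  by_cases h : j = ℓ
  · subst h; simp
  · simp [h]

lemma Cstep_apply (B C : Matrix ι ι ℤ) (ℓ i j : ι) :
    (C * ((Jmat ℓ : Matrix ι ι ℤ) + rowSel ℓ (matPos B))) i j + (colSel ℓ (matPos (-C)) * B) i j
      = (if j = ℓ then -(C i j) else C i j) + C i ℓ * max (B ℓ j) 0
        + max (-(C i ℓ)) 0 * B ℓ j := by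
  simp only [Matrix.mul_add, Matrix.add_apply, mulJ_apply, mul_rowSel_apply,
    colSel_mul_apply, matPos, Matrix.neg_apply]

lemma Fstep_apply (B C F : Matrix ι ι ℤ) (ℓ i k : ι) :
    (F * (Jmat ℓ : Matrix ι ι ℤ) + emax (colSel ℓ (matPos C) + F * colSel ℓ (matPos B))
      (colSel ℓ (matPos (-C)) + F * colSel ℓ (matPos (-B)))) i k
      = if k = ℓ then
          -(F i ℓ) + max (max (C i ℓ) 0 + ∑ m, F i m * max (B m ℓ) 0)
            (max (-(C i ℓ)) 0 + ∑ m, F i m * max (-(B m ℓ)) 0)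
        else F i k := by
  simp only [Matrix.add_apply, emax, mulJ_apply, mul_colSel_apply, colSel, matPos,
    Matrix.neg_apply]
  by_cases h : k = ℓ
  · subst h; simp
  · simp [h]

lemma mutate_neg (B : Matrix ι ι ℤ) (ℓ : ι) : mutate (-B) ℓ = -(mutate B ℓ) := by
  funext i j
  simp only [mutate, Matrix.neg_apply, neg_neg]
  split
  · rw [neg_neg]
  · have h1 : max (-B i ℓ) 0 = max (B i ℓ) 0 - B i ℓ := by omega
    have h2 : max (-B ℓ j) 0 = max (B ℓ j) 0 - B ℓ j := by omega
    rw [h1, h2]; ring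

lemma mutate_skew (d : ι → ℤ) (hd : ∀ i, 0 < d i) (B : Matrix ι ι ℤ)
    (hs : ∀ i j, d i * B i j = -(d j * B j i)) (ℓ : ι) :
    ∀ i j, d i * mutate B ℓ i j = -(d j * mutate B ℓ j i) := by
  have key : ∀ x y : ι, d x * max (B x y) 0 = d y * max (-(B y x)) 0 := by
    intro x y
    rw [mul_max_of_nonneg _ _ (hd x).le, mul_max_of_nonneg _ _ (hd y).le,
      mul_zero, mul_zero, hs x y, mul_neg]
  intro i j
  simp only [mutate]
  by_cases h : i = ℓ ∨ j = ℓ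
  · rw [if_pos h, if_pos (h.symm)]
    have := hs i j; linarith
  · rw [if_neg h, if_neg (fun hc => h hc.symm)]
    have h0 := hs i j
    have h1 := key i ℓ
    have h2 := key j ℓ
    have h3 := hs i ℓ
    have h4 := hs j ℓ
    linear_combination h0 + B ℓ j * h1 + max (-(B ℓ j)) 0 * h3 + B ℓ i * h2
      + max (-(B ℓ i)) 0 * h4

lemma skew_diag_zero (d : ι → ℤ) (hd : ∀ i, 0 < d i) (B : Matrix ι ι ℤ)
    (hs : ∀ i j, d i * B i j = -(d j * B j i)) (i : ι) : B i i = 0 := by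
  have h := hs i i
  have h0 : d i * B i i = 0 := by linarith
  rcases mul_eq_zero.mp h0 with h1 | h1
  · exact absurd h1 (hd i).ne'
  · exact h1

lemma fstep_key (c P N : ℤ) :
    max (max (c + (P - N)) 0 + N) (max (-(c + (P - N))) 0 + P)
      = max (max c 0 + P) (max (-c) 0 + N) := by omega

lemma cstep_key (c P N b : ℤ) :
    (c + (P - N)) * max (-b) 0 + max (-(c + (P - N))) 0 * (-b)
      = c * max b 0 + max (-c) 0 * b + P * b + (P - N) * max (-b) 0
        - max (max c 0 + P) (max (-c) 0 + N) * b := by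
  have h1 : max (-b) 0 = max b 0 - b := by omega
  have h2 : -c - max (-(c + (P - N))) 0
      = max (-c) 0 + P - max (max c 0 + P) (max (-c) 0 + N) := by omega
  rw [h1]
  linear_combination b * h2

lemma mul_eq_sub (F B : Matrix ι ι ℤ) (i ℓ : ι) :
    (F * B) i ℓ = (∑ k, F i k * max (B k ℓ) 0) - ∑ k, F i k * max (-(B k ℓ)) 0 := by
  rw [Matrix.mul_apply, ← Finset.sum_sub_distrib]
  refine Finset.sum_congr rfl fun k _ => ?_
  have h : max (B k ℓ) 0 - max (-(B k ℓ)) 0 = B k ℓ := by omega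
  linear_combination -(F i k) * h

lemma sum_mutate (B F : Matrix ι ι ℤ) (ℓ i j : ι) (hj : j ≠ ℓ) (h0 : B ℓ ℓ = 0) :
    ∑ k, F i k * mutate B ℓ k j
      = (∑ k, F i k * B k j) + (∑ k, F i k * max (B k ℓ) 0) * B ℓ j
        + (∑ k, F i k * B k ℓ) * max (-(B ℓ j)) 0 - 2 * (F i ℓ * B ℓ j) := by
  have hpt : ∀ k, F i k * mutate B ℓ k j
      = F i k * B k j + F i k * max (B k ℓ) 0 * B ℓ j + F i k * B k ℓ * max (-(B ℓ j)) 0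
        + (if k = ℓ then -(2 * (F i ℓ * B ℓ j)) else 0) := by
    intro k
    by_cases hk : k = ℓ
    · subst hk
      simp only [mutate, if_pos (Or.inl rfl), if_pos rfl, h0]
      simp; ring
    · have hc : ¬(k = ℓ ∨ j = ℓ) := by tauto
      simp only [mutate, if_neg hc, if_neg hk]
      ring
  rw [Finset.sum_congr rfl fun k _ => hpt k]
  rw [Finset.sum_add_distrib, Finset.sum_add_distrib, Finset.sum_add_distrib,
    Finset.sum_ite_eq' Finset.univ ℓ (fun _ => -(2 * (F i ℓ * B ℓ j))),
    ← Finset.sum_mul, ← Finset.sum_mul]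
  simp; ring

lemma seedStep_inv (d : ι → ℤ) (hd : ∀ i, 0 < d i) (B0 : Matrix ι ι ℤ)
    (s s' : SeedData ι ℤ) (ℓ : ι)
    (hs : ∀ i j, d i * s.B i j = -(d j * s.B j i))
    (hB : s'.B = -s.B) (hC : s'.C = s.C + s.F * s.B) (hF : s'.F = s.F) :
    (∀ i j, d i * (seedStep B0 s ℓ).B i j = -(d j * (seedStep B0 s ℓ).B j i)) ∧
    (seedStep (-B0) s' ℓ).B = -(seedStep B0 s ℓ).B ∧
    (seedStep (-B0) s' ℓ).C = (seedStep B0 s ℓ).C + (seedStep B0 s ℓ).F * (seedStep B0 s ℓ).B ∧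
    (seedStep (-B0) s' ℓ).F = (seedStep B0 s ℓ).F := by
  have hll : s.B ℓ ℓ = 0 := skew_diag_zero d hd s.B hs ℓ
  have hFeq : (seedStep (-B0) s' ℓ).F = (seedStep B0 s ℓ).F := by
    show s'.F * Jmat ℓ + emax (colSel ℓ (matPos s'.C) + s'.F * colSel ℓ (matPos s'.B))
        (colSel ℓ (matPos (-s'.C)) + s'.F * colSel ℓ (matPos (-s'.B)))
      = s.F * Jmat ℓ + emax (colSel ℓ (matPos s.C) + s.F * colSel ℓ (matPos s.B))
        (colSel ℓ (matPos (-s.C)) + s.F * colSel ℓ (matPos (-s.B)))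
    funext i k
    rw [Fstep_apply, Fstep_apply, hB, hC, hF]
    by_cases hk : k = ℓ
    · rw [hk]
      simp only [if_pos rfl, Matrix.neg_apply, Matrix.add_apply, neg_neg]
      rw [mul_eq_sub s.F s.B i ℓ]
      rw [fstep_key (s.C i ℓ) (∑ m, s.F i m * max (s.B m ℓ) 0)
        (∑ m, s.F i m * max (-(s.B m ℓ)) 0)]
    · simp [hk]
  refine ⟨mutate_skew d hd s.B hs ℓ, by show mutate s'.B ℓ = _; rw [hB, mutate_neg]; rfl, ?_, hFeq⟩
  show s'.C * (Jmat ℓ + rowSel ℓ (matPos s'.B)) + colSel ℓ (matPos (-s'.C)) * s'.B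
      = (s.C * (Jmat ℓ + rowSel ℓ (matPos s.B)) + colSel ℓ (matPos (-s.C)) * s.B)
        + (seedStep B0 s ℓ).F * mutate s.B ℓ
  funext i j
  simp only [Matrix.add_apply]
  rw [Cstep_apply, Cstep_apply, Matrix.mul_apply]
  have hF' : ∀ k, (seedStep B0 s ℓ).F i k
      = if k = ℓ then
          -(s.F i ℓ) + max (max (s.C i ℓ) 0 + ∑ m, s.F i m * max (s.B m ℓ) 0)
            (max (-(s.C i ℓ)) 0 + ∑ m, s.F i m * max (-(s.B m ℓ)) 0)
        else s.F i k := fun k => Fstep_apply s.B s.C s.F ℓ i k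
  set M := max (max (s.C i ℓ) 0 + ∑ m, s.F i m * max (s.B m ℓ) 0)
      (max (-(s.C i ℓ)) 0 + ∑ m, s.F i m * max (-(s.B m ℓ)) 0) with hM
  have hsplit : ∑ k, (seedStep B0 s ℓ).F i k * mutate s.B ℓ k j
      = (∑ k, s.F i k * mutate s.B ℓ k j)
        + (M - 2 * s.F i ℓ) * mutate s.B ℓ ℓ j := by
    have hpt : ∀ k, (seedStep B0 s ℓ).F i k * mutate s.B ℓ k j
        = s.F i k * mutate s.B ℓ k j
          + (if k = ℓ then (M - 2 * s.F i ℓ) * mutate s.B ℓ ℓ j else 0) := by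
      intro k
      rw [hF']
      by_cases hk : k = ℓ
      · subst hk; rw [if_pos rfl, if_pos rfl]; ring
      · rw [if_neg hk, if_neg hk]; ring
    rw [Finset.sum_congr rfl fun k _ => hpt k, Finset.sum_add_distrib,
      Finset.sum_ite_eq' Finset.univ ℓ (fun _ => (M - 2 * s.F i ℓ) * mutate s.B ℓ ℓ j)]
    simp
  rw [hsplit]
  by_cases hj : j = ℓ
  · rw [hj]
    have hmut : ∀ k, mutate s.B ℓ k ℓ = -(s.B k ℓ) := by
      intro k; simp [mutate]
    simp only [if_pos rfl, hB, hC, hF, Matrix.neg_apply, Matrix.add_apply, neg_neg, hll,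
      hmut, mul_neg]
    have hsum0 : ∑ k, -(s.F i k * s.B k ℓ) = -((s.F * s.B) i ℓ) := by
      rw [Matrix.mul_apply, ← Finset.sum_neg_distrib]
    rw [hsum0]
    simp only [max_self, neg_zero, mul_zero, zero_mul, if_true]
    ring
  · have hmutl : mutate s.B ℓ ℓ j = -(s.B ℓ j) := by
      simp [mutate]
    rw [sum_mutate s.B s.F ℓ i j hj hll, hmutl]
    simp only [if_neg hj, hB, hC, hF, Matrix.neg_apply, Matrix.add_apply, neg_neg]
    have hg := mul_eq_sub s.F s.B i ℓ
    rw [Matrix.mul_apply] at hg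
    simp only [Matrix.mul_apply]
    rw [hg]
    have := cstep_key (s.C i ℓ) (∑ k, s.F i k * max (s.B k ℓ) 0)
      (∑ k, s.F i k * max (-(s.B k ℓ)) 0) (s.B ℓ j)
    linear_combination this

lemma foldl_inv (d : ι → ℤ) (hd : ∀ i, 0 < d i) (B0 : Matrix ι ι ℤ) (p : List ι) :
    ∀ s s' : SeedData ι ℤ,
    (∀ i j, d i * s.B i j = -(d j * s.B j i)) →
    s'.B = -s.B → s'.C = s.C + s.F * s.B → s'.F = s.F →
    (p.foldl (seedStep (-B0)) s').F = (p.foldl (seedStep B0) s).F := by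
  induction p with
  | nil => intro s s' _ _ _ h3; exact h3
  | cons ℓ q ih =>
    intro s s' hs h1 h2 h3
    obtain ⟨g0, g1, g2, g3⟩ := seedStep_inv d hd B0 s s' ℓ hs h1 h2 h3
    exact ih _ _ g0 g1 g2 g3

end NegAux

/-- `F^{-B;t_0}_t = F^{B;t_0}_t`. -/
theorem Fmat_neg_eq_Fmat {n : ℕ} (B : Matrix (Fin n) (Fin n) ℤ)
    (hB : IsSkewSymmetrizable B) (p : List (Fin n)) :
    Fmat (-B) p = Fmat B p := by
  obtain ⟨d, hd, hskew⟩ := hB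
  have hs : ∀ i j, d i * B i j = -(d j * B j i) := by
    intro i j
    have h := congrFun (congrFun hskew i) j
    simp only [Matrix.transpose_apply, Matrix.neg_apply, Matrix.diagonal_mul] at h
    linarith
  exact foldl_inv d hd B p ⟨B, 1, 1, 0⟩ ⟨-B, 1, 1, 0⟩ hs rfl (by simp) rfl
end

section
/- Assume the sign-coherence of C-matrices: for every skew-symmetrizable initial integer matrix and every path, the associated C-matrix is column sign-coherent. Let B be a skew-symmetrizable n×n integer matrix, let t be a vertex reached from t_0 by the path (i_1,…,i_m), let k ∈ {1,…,n}, set B_1 = μ_k(B) assigned to the vertex t_1 adjacent to t_0 via the edge labeled k, and let C^{B_1;t_1}_t and G^{B_1;t_1}_t be the C- and G-matrices with initial matrix B_1 along the path (k,i_1,…,i_m) from t_1 to t. Then the k-th row of G^{B;t_0}_t is sign-coherent with row sign ε_{k•}(G^{B;t_0}_t), and the reduced initial-seed mutation formulas hold: C^{B_1;t_1}_t = (J_k + [−ε_{k•}(G^{B;t_0}_t) B]^{k•}_+) C^{B;t_0}_t and G^{B_1;t_1}_t = (J_k + [ε_{k•}(G^{B;t_0}_t) B]^{•k}_+) G^{B;t_0}_t.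 -/
open Matrix

section Aux

namespace CGAux

open Matrix Finset

variable {n : ℕ}

local notation "Mn" => Matrix (Fin n) (Fin n) ℤ

/-! ### Positive part helpers -/

lemma pp_sub (x : ℤ) : max x 0 - max (-x) 0 = x := by
  rcases le_total 0 x with h | h
  · rw [max_eq_left h, max_eq_right (neg_nonpos.mpr h)]; ring
  · rw [max_eq_right h, max_eq_left (neg_nonneg.mpr h)]; ring

lemma pp_of_nonneg {x : ℤ} (h : 0 ≤ x) : max x 0 = x := max_eq_left h

lemma pp_of_nonpos {x : ℤ} (h : x ≤ 0) : max x 0 = 0 := max_eq_right h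

lemma mul_pp {c : ℤ} (hc : 0 ≤ c) (x : ℤ) : c * max x 0 = max (c * x) 0 := by
  rw [mul_max_of_nonneg _ _ hc, mul_zero]

/-! ### The elementary matrices E and F -/

def Emat (σ : ℤ) (l : Fin n) (M : Mn) : Mn := Jmat l + rowSel l (matPos (σ • M))

def Fmat (σ : ℤ) (l : Fin n) (M : Mn) : Mn := Jmat l + colSel l (matPos (σ • M))

lemma Jmat_apply (l i j : Fin n) :
    (Jmat l : Mn) i j = if i = j then (if i = l then -1 else 1) else 0 := by
  simp [Jmat, Matrix.diagonal_apply]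

lemma Jmat_eq (l : Fin n) :
    (Jmat l : Mn) = Matrix.diagonal (fun i => if i = l then -1 else 1) := rfl

lemma Jmat_mul_apply (l : Fin n) (A : Mn) (i j : Fin n) :
    ((Jmat l : Mn) * A) i j = if i = l then -(A i j) else A i j := by
  rw [Jmat_eq, Matrix.diagonal_mul]
  split_ifs <;> ring

lemma mul_Jmat_apply (l : Fin n) (A : Mn) (i j : Fin n) :
    (A * (Jmat l : Mn)) i j = if j = l then -(A i j) else A i j := by
  rw [Jmat_eq, Matrix.mul_diagonal]
  split_ifs <;> ring

lemma mul_rowSel_apply (A U : Mn) (l i j : Fin n) :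
    (A * rowSel l U) i j = A i l * U l j := by
  simp only [Matrix.mul_apply, rowSel]
  rw [Finset.sum_eq_single l]
  · simp
  · intro b _ hb; simp [hb]
  · intro h; exact absurd (Finset.mem_univ l) h

lemma colSel_mul_apply (U A : Mn) (l i j : Fin n) :
    (colSel l U * A) i j = U i l * A l j := by
  simp only [Matrix.mul_apply, colSel]
  rw [Finset.sum_eq_single l]
  · simp
  · intro b _ hb; simp [hb]
  · intro h; exact absurd (Finset.mem_univ l) h

lemma rowSel_mul (U A : Mn) (l : Fin n) : rowSel l U * A = rowSel l (U * A) := by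
  ext i j
  simp only [Matrix.mul_apply, rowSel]
  by_cases hi : i = l
  · simp [hi]
  · simp [hi]

lemma mul_colSel (A U : Mn) (l : Fin n) : A * colSel l U = colSel l (A * U) := by
  ext i j
  simp only [Matrix.mul_apply, colSel]
  by_cases hj : j = l
  · simp [hj]
  · simp [hj]

lemma smul_entry (σ : ℤ) (M : Mn) (i j : Fin n) : (σ • M) i j = σ * M i j := rfl

lemma matPos_apply (M : Mn) (i j : Fin n) : matPos M i j = max (M i j) 0 := rfl

lemma mul_Emat_apply (A : Mn) {b : Mn} {l : Fin n} (hb : b l l = 0) (σ : ℤ) (i j : Fin n) :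
    (A * Emat σ l b) i j =
      if j = l then -(A i l) else A i j + A i l * max (σ * b l j) 0 := by
  rw [Emat, Matrix.mul_add, Matrix.add_apply, mul_rowSel_apply, mul_Jmat_apply]
  rw [matPos_apply, smul_entry]
  split_ifs with h
  · subst h; rw [hb, mul_zero]; simp
  · rfl

lemma Emat_mul_apply (b A : Mn) (σ : ℤ) (k i j : Fin n) :
    (Emat σ k b * A) i j =
      if i = k then -(A k j) + ∑ m, max (σ * b k m) 0 * A m j else A i j := by
  rw [Emat, Matrix.add_mul, Matrix.add_apply, rowSel_mul, Jmat_mul_apply]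
  have : rowSel k (matPos (σ • b) * A) i j
      = if i = k then ∑ m, max (σ * b k m) 0 * A m j else 0 := by
    simp only [rowSel, Matrix.mul_apply, matPos_apply, smul_entry]
    split_ifs with h
    · subst h; rfl
    · rfl
  rw [this]
  split_ifs with h
  · subst h; ring
  · ring

lemma mul_Fmat_apply (A : Mn) (b : Mn) (σ : ℤ) (l i j : Fin n) :
    (A * Fmat σ l b) i j =
      if j = l then -(A i l) + ∑ m, A i m * max (σ * b m l) 0 else A i j := by
  rw [Fmat, Matrix.mul_add, Matrix.add_apply, mul_colSel, mul_Jmat_apply]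
  have : colSel l (A * matPos (σ • b)) i j
      = if j = l then ∑ m, A i m * max (σ * b m l) 0 else 0 := by
    simp only [colSel, Matrix.mul_apply, matPos_apply, smul_entry]
    split_ifs with h
    · subst h; rfl
    · rfl
  rw [this]
  split_ifs with h
  · subst h; ring
  · ring

lemma Fmat_mul_apply {b : Mn} (A : Mn) {k : Fin n} (hb : b k k = 0) (σ : ℤ) (i j : Fin n) :
    (Fmat σ k b * A) i j =
      if i = k then -(A k j) else A i j + max (σ * b i k) 0 * A k j := by
  rw [Fmat, Matrix.add_mul, Matrix.add_apply, Jmat_mul_apply]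
  have : (colSel k (matPos (σ • b)) * A) i j = max (σ * b i k) 0 * A k j := by
    rw [colSel_mul_apply, matPos_apply, smul_entry]
  rw [this]
  split_ifs with h
  · subst h; rw [hb, mul_zero]; simp
  · rfl

lemma Emat_transpose (σ : ℤ) (l : Fin n) (b : Mn) : (Emat σ l b)ᵀ = Fmat σ l bᵀ := by
  ext i j
  simp only [Matrix.transpose_apply, Emat, Fmat, Matrix.add_apply, Jmat_apply,
    rowSel, colSel, matPos_apply, smul_entry]
  by_cases hij : i = j
  · subst hij; simp
  · have hji : ¬ (j = i) := fun h => hij h.symm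
    simp [hij, hji]

lemma Fmat_transpose (σ : ℤ) (l : Fin n) (b : Mn) : (Fmat σ l b)ᵀ = Emat σ l bᵀ := by
  have h := Emat_transpose σ l bᵀ
  rw [Matrix.transpose_transpose] at h
  rw [← h, Matrix.transpose_transpose]

lemma Emat_neg (σ : ℤ) (l : Fin n) (b : Mn) : Emat σ l (-b) = Emat (-σ) l b := by
  unfold Emat
  congr 1
  ext i j
  simp [rowSel, matPos, smul_entry]

lemma Fmat_neg (σ : ℤ) (l : Fin n) (b : Mn) : Fmat σ l (-b) = Fmat (-σ) l b := by
  unfold Fmat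
  congr 1
  ext i j
  simp [colSel, matPos, smul_entry]

lemma Fmat_mul_self {b : Mn} {l : Fin n} (hb : b l l = 0) (σ : ℤ) :
    Fmat σ l b * Fmat σ l b = 1 := by
  have hFlj : ∀ j', (Fmat σ l b) l j' = if j' = l then -1 else 0 := by
    intro j'
    simp only [Fmat, Matrix.add_apply, Jmat_apply, colSel, matPos_apply, smul_entry]
    by_cases h : j' = l
    · subst h; simp [hb]
    · have h2 : ¬ (l = j') := fun hh => h hh.symm
      simp [h, h2]
  have hFoff : ∀ i j, i ≠ l → (Fmat σ l b) i j
      = (if i = j then 1 else 0) + (if j = l then max (σ * b i l) 0 else 0) := by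
    intro i j hi
    simp only [Fmat, Matrix.add_apply, Jmat_apply, colSel, matPos_apply, smul_entry]
    by_cases hj : j = l
    · subst hj
      by_cases hij : i = j
      · exact absurd hij hi
      · simp [hij]
    · by_cases hij : i = j
      · subst hij; simp [hi, hj]
      · simp [hij, hj]
  ext i j
  rw [Fmat_mul_apply _ hb]
  by_cases hi : i = l
  · rw [if_pos hi, hFlj, hi]
    by_cases hj : j = l
    · subst hj; simp [Matrix.one_apply]
    · have : l ≠ j := fun hh => hj hh.symm
      simp [hj, Matrix.one_apply, this]
  · rw [if_neg hi, hFlj, hFoff i j hi]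
    by_cases hj : j = l
    · subst hj
      have hij : i ≠ j := hi
      simp only [Matrix.one_apply, hij, if_true, if_false, ite_true, ite_false, if_neg hij]
      ring
    · simp only [if_neg hj, Matrix.one_apply]
      ring


/-! ### Skew-symmetrizability -/

def Skew (d : Fin n → ℤ) (M : Mn) : Prop := ∀ i j, d i * M i j + d j * M j i = 0

lemma diag_zero {d : Fin n → ℤ} {M : Mn} (hd : ∀ i, 0 < d i) (hM : Skew d M) (i : Fin n) :
    M i i = 0 := by
  have h := hM i i
  have h2 : d i * M i i = 0 := by linarith
  rcases mul_eq_zero.mp h2 with h3 | h3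
  · exact absurd h3 (hd i).ne'
  · exact h3

lemma skew_neg {d : Fin n → ℤ} {M : Mn} (hM : Skew d M) : Skew d (-M) := by
  intro i j
  have := hM i j
  simp only [Matrix.neg_apply]
  ring_nf
  linarith

lemma sign_flip {d : Fin n → ℤ} {M : Mn} (hd : ∀ i, 0 < d i) (hM : Skew d M) {i j : Fin n}
    (h : 0 ≤ M i j) : M j i ≤ 0 := by
  have h1 := hM i j
  nlinarith [hd i, hd j, mul_nonneg (hd i).le h]

lemma sign_flip' {d : Fin n → ℤ} {M : Mn} (hd : ∀ i, 0 < d i) (hM : Skew d M) {i j : Fin n}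
    (h : M i j ≤ 0) : 0 ≤ M j i := by
  have h1 := hM i j
  nlinarith [hd i, hd j, mul_nonpos_of_nonneg_of_nonpos (hd i).le h]

lemma isSkewSymmetrizable_of {d : Fin n → ℤ} {M : Mn} (hd : ∀ i, 0 < d i) (hM : Skew d M) :
    IsSkewSymmetrizable M := by
  refine ⟨d, hd, ?_⟩
  ext i j
  have := hM j i
  simp only [Matrix.transpose_apply, Matrix.neg_apply, Matrix.diagonal_mul]
  linarith

lemma skew_of_isSkewSymmetrizable {M : Mn} (h : IsSkewSymmetrizable M) :
    ∃ d : Fin n → ℤ, (∀ i, 0 < d i) ∧ Skew d M := by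
  obtain ⟨d, hd, hM⟩ := h
  refine ⟨d, hd, fun i j => ?_⟩
  have := congrFun (congrFun hM j) i
  simp only [Matrix.transpose_apply, Matrix.neg_apply, Matrix.diagonal_mul] at this
  linarith

/-! ### D-swap lemmas -/

lemma Dswap_F {d : Fin n → ℤ} (hd : ∀ i, 0 < d i) {b : Mn} (hb : Skew d b) (σ : ℤ) (l : Fin n) :
    Fmat σ l bᵀ * Matrix.diagonal d = Matrix.diagonal d * Fmat (-σ) l b := by
  have hbll : b l l = 0 := diag_zero hd hb l
  ext i j
  rw [Matrix.mul_diagonal, Matrix.diagonal_mul]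
  simp only [Fmat, Matrix.add_apply, Jmat_apply, colSel, matPos_apply, smul_entry,
    Matrix.transpose_apply]
  by_cases hj : j = l
  · rw [hj]
    simp only [eq_self_iff_true, if_true]
    by_cases hi : i = l
    · rw [hi]
      simp [hbll]
    · simp only [hi, if_false]
      have h1 : max (σ * b l i) 0 * d l = max (d l * (σ * b l i)) 0 := by
        rw [mul_comm, mul_pp (hd l).le]
      have h2 : d i * max (-σ * b i l) 0 = max (d i * (-σ * b i l)) 0 := mul_pp (hd i).le _
      have h3 : d l * (σ * b l i) = d i * (-σ * b i l) := by
        linear_combination σ * hb l i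
      by_cases hij : i = l
      · exact absurd hij hi
      · simp only [if_neg hi, zero_add]
        rw [h1, h2, h3]
  · simp only [hj, if_false, add_zero]
    by_cases hij : i = j
    · rw [hij]
      simp only [eq_self_iff_true, if_true]
      ring
    · simp [hij]

lemma Dswap_E {d : Fin n → ℤ} (hd : ∀ i, 0 < d i) {b : Mn} (hb : Skew d b) (σ : ℤ) (l : Fin n) :
    Matrix.diagonal d * Emat σ l b = Emat (-σ) l bᵀ * Matrix.diagonal d := by
  have hbll : b l l = 0 := diag_zero hd hb l
  ext i j
  rw [Matrix.mul_diagonal, Matrix.diagonal_mul]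
  simp only [Emat, Matrix.add_apply, Jmat_apply, rowSel, matPos_apply, smul_entry,
    Matrix.transpose_apply]
  by_cases hi : i = l
  · rw [hi]
    simp only [eq_self_iff_true, if_true]
    by_cases hj : j = l
    · rw [hj]
      simp [hbll]
    · have h1 : d l * max (σ * b l j) 0 = max (d l * (σ * b l j)) 0 := mul_pp (hd l).le _
      have h2 : max (-σ * b j l) 0 * d j = max (d j * (-σ * b j l)) 0 := by
        rw [mul_comm, mul_pp (hd j).le]
      have h3 : d l * (σ * b l j) = d j * (-σ * b j l) := by
        linear_combination σ * hb l j
      have hlj : ¬ (l = j) := fun h => hj h.symm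
      simp only [hlj, if_false, zero_add]
      rw [h1, h2, h3]
  · simp only [hi, if_false, add_zero]
    by_cases hij : i = j
    · rw [hij]
      simp only [eq_self_iff_true, if_true]
      ring
    · simp [hij]

/-! ### Mutation lemmas -/

lemma mutate_apply (B : Mn) (k i j : Fin n) :
    mutate B k i j = if i = k ∨ j = k then -(B i j)
      else B i j + max (B i k) 0 * B k j + B i k * max (-(B k j)) 0 := rfl

lemma mutate_mutate (B : Mn) (k : Fin n) : mutate (mutate B k) k = B := by
  ext i j
  by_cases h : i = k ∨ j = k
  · rw [mutate_apply, if_pos h, mutate_apply, if_pos h, neg_neg]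
  · push_neg at h
    have hik : mutate B k i k = -(B i k) := by rw [mutate_apply, if_pos (Or.inr rfl)]
    have hkj : mutate B k k j = -(B k j) := by rw [mutate_apply, if_pos (Or.inl rfl)]
    have hij : mutate B k i j = B i j + max (B i k) 0 * B k j + B i k * max (-(B k j)) 0 := by
      rw [mutate_apply, if_neg (by push_neg; exact h)]
    rw [mutate_apply, if_neg (by push_neg; exact h), hik, hkj, hij, neg_neg]
    linear_combination (B k j) * pp_sub (B i k) - (B i k) * pp_sub (B k j)

lemma mutate_neg (B : Mn) (k : Fin n) : mutate (-B) k = -(mutate B k) := by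
  have hm : ∀ i j, (i = k ∨ j = k) → mutate B k i j = -(B i j) := fun i j h => by
    rw [mutate_apply, if_pos h]
  ext i j
  rw [Matrix.neg_apply]
  by_cases h : i = k ∨ j = k
  · rw [mutate_apply, if_pos h, hm i j h, Matrix.neg_apply]
  · rw [mutate_apply, if_neg h, mutate_apply, if_neg h]
    simp only [Matrix.neg_apply, neg_neg]
    linear_combination (B k j) * pp_sub (B i k) - (B i k) * pp_sub (B k j)

lemma mutate_skew {d : Fin n → ℤ} {B : Mn} (hd : ∀ i, 0 < d i) (hB : Skew d B) (k : Fin n) :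
    Skew d (mutate B k) := by
  have hm : ∀ i j, (i = k ∨ j = k) → mutate B k i j = -(B i j) := fun i j h => by
    rw [mutate_apply, if_pos h]
  intro i j
  by_cases h : i = k ∨ j = k
  · have h' : j = k ∨ i = k := h.symm
    rw [hm i j h, hm j i h']
    linear_combination (-1 : ℤ) * hB i j
  · push_neg at h
    rw [mutate_apply, if_neg (by push_neg; exact h),
      mutate_apply, if_neg (by push_neg; exact ⟨h.2, h.1⟩)]
    rcases le_total 0 (B i k) with h1 | h1 <;> rcases le_total 0 (B k j) with h2 | h2
    · have h3 : B k i ≤ 0 := sign_flip hd hB h1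
      have h4 : B j k ≤ 0 := sign_flip hd hB h2
      rw [pp_of_nonneg h1, pp_of_nonpos (neg_nonpos.mpr h2),
        pp_of_nonpos h4, pp_of_nonneg (neg_nonneg.mpr h3)]
      linear_combination hB i j + (B k j) * hB i k - (B k i) * hB j k
    · have h3 : B k i ≤ 0 := sign_flip hd hB h1
      have h4 : 0 ≤ B j k := sign_flip' hd hB h2
      rw [pp_of_nonneg h1, pp_of_nonneg (neg_nonneg.mpr h2),
        pp_of_nonneg h4, pp_of_nonneg (neg_nonneg.mpr h3)]
      linear_combination hB i j
    · have h3 : 0 ≤ B k i := sign_flip' hd hB h1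
      have h4 : B j k ≤ 0 := sign_flip hd hB h2
      rw [pp_of_nonpos h1, pp_of_nonpos (neg_nonpos.mpr h2),
        pp_of_nonpos h4, pp_of_nonpos (neg_nonpos.mpr h3)]
      linear_combination hB i j
    · have h3 : 0 ≤ B k i := sign_flip' hd hB h1
      have h4 : 0 ≤ B j k := sign_flip' hd hB h2
      rw [pp_of_nonpos h1, pp_of_nonneg (neg_nonneg.mpr h2),
        pp_of_nonneg h4, pp_of_nonpos (neg_nonpos.mpr h3)]
      linear_combination hB i j - (B k j) * hB i k + (B k i) * hB j k

lemma mutate_eq_FBE {b : Mn} {l : Fin n} (hb : b l l = 0) :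
    mutate b l = Fmat 1 l b * b * Emat (-1) l b := by
  ext i j
  rw [mul_Emat_apply _ hb]
  have hFb : ∀ i' j', (Fmat 1 l b * b) i' j'
      = if i' = l then -(b l j') else b i' j' + max (b i' l) 0 * b l j' := by
    intro i' j'
    rw [Fmat_mul_apply _ hb, one_mul]
  by_cases hj : j = l
  · rw [if_pos hj, hFb, hj]
    by_cases hi : i = l
    · rw [if_pos hi, mutate_apply, if_pos (Or.inr rfl), hi, hb]
      ring
    · rw [if_neg hi, mutate_apply, if_pos (Or.inr rfl), hb]
      ring
  · rw [if_neg hj, hFb, hFb]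
    by_cases hi : i = l
    · rw [if_pos hi, if_pos hi, mutate_apply, if_pos (Or.inl hi), hi, hb]
      simp
    · rw [if_neg hi, if_neg hi, mutate_apply, if_neg (by push_neg; exact ⟨hi, hj⟩)]
      rw [hb, neg_one_mul]
      ring

/-! ### Seed path lemmas -/

lemma seedOf_append (B0 : Mn) (p : List (Fin n)) (l : Fin n) :
    seedOf B0 (p ++ [l]) = seedStep B0 (seedOf B0 p) l := by
  unfold seedOf
  rw [List.foldl_append]
  rfl

lemma Cmat_nil (B0 : Mn) : Cmat B0 [] = 1 := rfl
lemma Gmat_nil (B0 : Mn) : Gmat B0 [] = 1 := rfl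
lemma Bpath_nil (B0 : Mn) : Bpath B0 [] = B0 := rfl

lemma Bpath_append (B0 : Mn) (p : List (Fin n)) (l : Fin n) :
    Bpath B0 (p ++ [l]) = mutate (Bpath B0 p) l := by
  unfold Bpath
  rw [seedOf_append]
  rfl

lemma Cmat_append (B0 : Mn) (p : List (Fin n)) (l : Fin n) :
    Cmat B0 (p ++ [l]) = Cmat B0 p * (Jmat l + rowSel l (matPos (Bpath B0 p)))
      + colSel l (matPos (-(Cmat B0 p))) * Bpath B0 p := by
  unfold Cmat Bpath
  rw [seedOf_append]
  rfl

lemma Gmat_append (B0 : Mn) (p : List (Fin n)) (l : Fin n) :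
    Gmat B0 (p ++ [l]) = Gmat B0 p * (Jmat l + colSel l (matPos (Bpath B0 p)))
      - B0 * colSel l (matPos (Cmat B0 p)) := by
  unfold Gmat Cmat Bpath
  rw [seedOf_append]
  rfl

lemma seedB (B0 : Mn) : ∀ (p : List (Fin n)) (s : SeedData (Fin n) ℤ),
    (List.foldl (seedStep B0) s p).B = List.foldl mutate s.B p := by
  intro p
  induction p with
  | nil => intro s; rfl
  | cons a q ih =>
    intro s
    rw [List.foldl_cons, List.foldl_cons, ih]
    rfl

lemma Bpath_foldl (B0 : Mn) (p : List (Fin n)) : Bpath B0 p = List.foldl mutate B0 p :=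
  seedB B0 p _

lemma Bpath_mutate_cons (B0 : Mn) (k : Fin n) (p : List (Fin n)) :
    Bpath (mutate B0 k) (k :: p) = Bpath B0 p := by
  rw [Bpath_foldl, List.foldl_cons, mutate_mutate, ← Bpath_foldl]

lemma skew_Bpath {d : Fin n → ℤ} (hd : ∀ i, 0 < d i) {B : Mn} (hB : Skew d B)
    (p : List (Fin n)) : Skew d (Bpath B p) := by
  rw [Bpath_foldl]
  induction p generalizing B with
  | nil => exact hB
  | cons a q ih => exact ih (mutate_skew hd hB a)

lemma JrowSel_eq (l : Fin n) (b : Mn) : (Jmat l : Mn) + rowSel l (matPos b) = Emat 1 l b := by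
  rw [Emat, one_smul]

lemma JcolSel_eq (l : Fin n) (b : Mn) : (Jmat l : Mn) + colSel l (matPos b) = Fmat 1 l b := by
  rw [Fmat, one_smul]

lemma matPos_negone : matPos (-(1 : Mn)) = 0 := by
  ext i j
  simp only [matPos_apply, Matrix.neg_apply, Matrix.one_apply, Matrix.zero_apply]
  split_ifs <;> simp

lemma matPos_one : matPos (1 : Mn) = 1 := by
  ext i j
  simp only [matPos_apply, Matrix.one_apply]
  split_ifs <;> simp

lemma colSel_zero (l : Fin n) : colSel l (0 : Mn) = 0 := by
  ext i j
  simp [colSel]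

lemma Cmat_single (B0 : Mn) (k : Fin n) : Cmat B0 [k] = Emat 1 k B0 := by
  have h : ([k] : List (Fin n)) = [] ++ [k] := rfl
  rw [h, Cmat_append, Cmat_nil, Bpath_nil, one_mul, matPos_negone, colSel_zero,
    Matrix.zero_mul, add_zero, JrowSel_eq]

lemma Gmat_single (B0 : Mn) (k : Fin n) : Gmat B0 [k] = Fmat (-1) k B0 := by
  have h : ([k] : List (Fin n)) = [] ++ [k] := rfl
  rw [h, Gmat_append, Gmat_nil, Cmat_nil, Bpath_nil, one_mul, matPos_one, mul_colSel,
    Matrix.mul_one]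
  ext i j
  simp only [Matrix.sub_apply, Matrix.add_apply, Jmat_apply, colSel, matPos_apply,
    Fmat, smul_entry]
  by_cases hj : j = k
  · rw [if_pos hj, if_pos hj, if_pos hj, hj]
    have : max (-1 * B0 i k) 0 = max (B0 i k) 0 - B0 i k := by
      rw [neg_one_mul]
      linear_combination (-1 : ℤ) * pp_sub (B0 i k)
    rw [this]
    ring
  · rw [if_neg hj, if_neg hj, if_neg hj]
    ring

lemma Emat_mutate (B0 : Mn) (k : Fin n) : Emat 1 k (mutate B0 k) = Emat (-1) k B0 := by
  unfold Emat
  congr 1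
  ext i j
  simp only [rowSel, matPos_apply, smul_entry]
  by_cases hi : i = k
  · rw [if_pos hi, if_pos hi, hi, mutate_apply, if_pos (Or.inl rfl)]
    rw [one_mul, neg_one_mul]
  · rw [if_neg hi, if_neg hi]

lemma Fmat_mutate (B0 : Mn) (k : Fin n) : Fmat (-1) k (mutate B0 k) = Fmat 1 k B0 := by
  unfold Fmat
  congr 1
  ext i j
  simp only [colSel, matPos_apply, smul_entry]
  by_cases hj : j = k
  · rw [if_pos hj, if_pos hj, hj, mutate_apply, if_pos (Or.inr rfl)]
    rw [one_mul, neg_one_mul, neg_neg]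
  · rw [if_neg hj, if_neg hj]

/-! ### Multiplicative one-step lemmas -/

lemma stepC {d : Fin n → ℤ} (hd : ∀ i, 0 < d i) {B : Mn} (hB : Skew d B)
    (p : List (Fin n)) (l : Fin n) (σ : ℤ) (hσ1 : σ = 1 ∨ σ = -1)
    (hσc : ∀ i, 0 ≤ σ * Cmat B p i l) :
    Cmat B (p ++ [l]) = Cmat B p * Emat σ l (Bpath B p) := by
  have hbll : Bpath B p l l = 0 := diag_zero hd (skew_Bpath hd hB p) l
  rw [Cmat_append, JrowSel_eq]
  ext i j
  rw [Matrix.add_apply, colSel_mul_apply, mul_Emat_apply _ hbll, mul_Emat_apply _ hbll]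
  have hpos : matPos (-(Cmat B p)) i l = max (-(Cmat B p i l)) 0 := by
    rw [matPos_apply, Matrix.neg_apply]
  rw [hpos]
  rcases hσ1 with rfl | rfl
  · have hc : 0 ≤ Cmat B p i l := by simpa using hσc i
    rw [pp_of_nonpos (neg_nonpos.mpr hc)]
    split_ifs with h
    · rw [h, hbll]; ring
    · ring
  · have hc : Cmat B p i l ≤ 0 := by
      have := hσc i
      linarith
    rw [pp_of_nonneg (neg_nonneg.mpr hc)]
    split_ifs with h
    · rw [h, hbll]; ring
    · rw [one_mul, neg_one_mul]
      linear_combination (Cmat B p i l) * pp_sub (Bpath B p l j)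


/-! ### G B = B C -/

lemma colSel_mul_F {b : Mn} {l : Fin n} (hbll : b l l = 0) (U : Mn) (σ : ℤ) :
    colSel l U * Fmat σ l b = -(colSel l U) := by
  ext i j
  rw [mul_Fmat_apply]
  simp only [colSel, Matrix.neg_apply]
  have hsum : ∑ x, (if x = l then U i x else 0) * max (σ * b x l) 0 = 0 := by
    apply Finset.sum_eq_zero
    intro m _
    by_cases hm : m = l
    · rw [if_pos hm, hm, hbll, mul_zero]
      simp
    · rw [if_neg hm, zero_mul]
  split_ifs with h
  · rw [hsum, h]
    ring
  · ring

lemma mul_mul_cancel {A X F : Mn} (hFF : F * F = 1) : (A * F) * (F * X) = A * X := by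
  rw [Matrix.mul_assoc, ← Matrix.mul_assoc F, hFF, Matrix.one_mul]

lemma colSel_mul_b_mul_E {b : Mn} {l : Fin n} (hbll : b l l = 0) (U : Mn) (τ : ℤ) :
    colSel l U * b * Emat τ l b = colSel l U * b := by
  ext i j
  rw [mul_Emat_apply _ hbll]
  have hA : (colSel l U * b) i l = 0 := by rw [colSel_mul_apply, hbll, mul_zero]
  split_ifs with h
  · rw [h, hA, neg_zero]
  · rw [hA, zero_mul, add_zero]

lemma ALTC {b : Mn} {l : Fin n} (hbll : b l l = 0) (C : Mn) :
    C * Emat (-1) l b + colSel l (matPos C) * b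
      = C * Emat 1 l b + colSel l (matPos (-C)) * b := by
  ext i j
  rw [Matrix.add_apply, Matrix.add_apply, colSel_mul_apply, colSel_mul_apply,
    mul_Emat_apply _ hbll, mul_Emat_apply _ hbll]
  have h1 : matPos C i l = max (C i l) 0 := rfl
  have h2 : matPos (-C) i l = max (-(C i l)) 0 := by rw [matPos_apply, Matrix.neg_apply]
  rw [h1, h2]
  split_ifs with h
  · rw [h, hbll]; ring
  · rw [one_mul, neg_one_mul]
    linear_combination (b l j) * pp_sub (C i l) - (C i l) * pp_sub (b l j)

lemma GB_BC {d : Fin n → ℤ} (hd : ∀ i, 0 < d i) {B : Mn} (hB : Skew d B) :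
    ∀ p : List (Fin n), Gmat B p * Bpath B p = B * Cmat B p := by
  intro p
  induction p using List.reverseRecOn with
  | nil => rw [Cmat_nil, Gmat_nil, Bpath_nil, Matrix.one_mul, Matrix.mul_one]
  | append_singleton q l ih =>
    have hskewb := skew_Bpath hd hB q
    have hbll : Bpath B q l l = 0 := diag_zero hd hskewb l
    rw [Gmat_append, Bpath_append, Cmat_append, mutate_eq_FBE hbll, JcolSel_eq, JrowSel_eq]
    set b := Bpath B q with hb
    set C := Cmat B q with hC
    set G := Gmat B q with hG
    have hFF : Fmat 1 l b * Fmat 1 l b = 1 := Fmat_mul_self hbll 1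
    have e1 : G * Fmat 1 l b * (Fmat 1 l b * b * Emat (-1) l b) = B * C * Emat (-1) l b := by
      rw [Matrix.mul_assoc (Fmat 1 l b) b, mul_mul_cancel hFF, ← Matrix.mul_assoc, ih]
    have e2 : B * colSel l (matPos C) * (Fmat 1 l b * b * Emat (-1) l b)
        = -(B * (colSel l (matPos C) * b)) := by
      calc B * colSel l (matPos C) * (Fmat 1 l b * b * Emat (-1) l b)
          = B * (colSel l (matPos C) * Fmat 1 l b) * b * Emat (-1) l b := by
            simp only [Matrix.mul_assoc]
        _ = B * (-(colSel l (matPos C))) * b * Emat (-1) l b := by rw [colSel_mul_F hbll]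
        _ = -(B * (colSel l (matPos C) * b * Emat (-1) l b)) := by
            simp only [Matrix.mul_neg, Matrix.neg_mul, Matrix.mul_assoc]
        _ = -(B * (colSel l (matPos C) * b)) := by rw [colSel_mul_b_mul_E hbll]
    rw [Matrix.sub_mul, e1, e2, sub_neg_eq_add, Matrix.mul_add]
    rw [Matrix.mul_assoc B C, ← Matrix.mul_add, ALTC hbll, Matrix.mul_add]

lemma colSel_matPos_of_nonneg {C : Mn} {l : Fin n} (h : ∀ i, 0 ≤ C i l) :
    colSel l (matPos C) = colSel l C := by
  ext i j
  simp only [colSel, matPos_apply]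
  split_ifs with hj
  · rw [hj, pp_of_nonneg (h i)]
  · rfl

lemma colSel_matPos_of_nonpos {C : Mn} {l : Fin n} (h : ∀ i, C i l ≤ 0) :
    colSel l (matPos C) = 0 := by
  ext i j
  simp only [colSel, matPos_apply, Matrix.zero_apply]
  split_ifs with hj
  · rw [hj, pp_of_nonpos (h i)]
  · rfl

lemma stepG {d : Fin n → ℤ} (hd : ∀ i, 0 < d i) {B : Mn} (hB : Skew d B)
    (p : List (Fin n)) (l : Fin n) (σ : ℤ) (hσ1 : σ = 1 ∨ σ = -1)
    (hσc : ∀ i, 0 ≤ σ * Cmat B p i l) :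
    Gmat B (p ++ [l]) = Gmat B p * Fmat (-σ) l (Bpath B p) := by
  have hskewb := skew_Bpath hd hB p
  have hbll : Bpath B p l l = 0 := diag_zero hd hskewb l
  have hGB := GB_BC hd hB p
  rw [Gmat_append, JcolSel_eq]
  rw [sub_eq_iff_eq_add']
  set b := Bpath B p with hbdef
  set C := Cmat B p with hCdef
  set G := Gmat B p with hGdef
  rcases hσ1 with rfl | rfl
  · have hc : ∀ i, 0 ≤ C i l := fun i => by simpa using hσc i
    have hsub : Fmat 1 l b - Fmat (-1) l b = colSel l b := by
      rw [Fmat, Fmat, add_sub_add_left_eq_sub]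
      ext i j
      simp only [Matrix.sub_apply, colSel, matPos_apply, smul_entry]
      split_ifs with hj
      · rw [one_mul, neg_one_mul, pp_sub]
      · ring
    have : G * Fmat 1 l b - G * Fmat (-1) l b = B * colSel l (matPos C) := by
      rw [← Matrix.mul_sub, hsub, mul_colSel, hGB, ← mul_colSel,
        colSel_matPos_of_nonneg hc]
    rw [← this]
    abel
  · have hc : ∀ i, C i l ≤ 0 := fun i => by have := hσc i; linarith
    have hmm : Fmat (-(-1)) l b = Fmat 1 l b := by norm_num
    rw [hmm, colSel_matPos_of_nonpos hc, Matrix.mul_zero, zero_add]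

/-! ### Duality -/

lemma exists_colsign (hsc : SignCoherenceOfC) {d : Fin n → ℤ} (hd : ∀ i, 0 < d i)
    {B : Mn} (hB : Skew d B) (p : List (Fin n)) (l : Fin n) :
    ∃ σ : ℤ, (σ = 1 ∨ σ = -1) ∧ (∀ i, 0 ≤ σ * Cmat B p i l) ∧ (∃ i, Cmat B p i l ≠ 0) := by
  obtain ⟨hne, hco⟩ := hsc (Fin n) B (isSkewSymmetrizable_of hd hB) p l
  rcases hco with h | h
  · exact ⟨1, Or.inl rfl, fun i => by simpa using h i, hne⟩
  · exact ⟨-1, Or.inr rfl, fun i => by have := h i; linarith, hne⟩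

lemma dualityCDG (hsc : SignCoherenceOfC) {d : Fin n → ℤ} (hd : ∀ i, 0 < d i)
    {B : Mn} (hB : Skew d B) :
    ∀ p : List (Fin n), (Cmat B p)ᵀ * Matrix.diagonal d * Gmat B p = Matrix.diagonal d := by
  intro p
  induction p using List.reverseRecOn with
  | nil => rw [Cmat_nil, Gmat_nil, Matrix.transpose_one, Matrix.one_mul, Matrix.mul_one]
  | append_singleton q l ih =>
    obtain ⟨σ, hσ1, hσc, -⟩ := exists_colsign hsc hd hB q l
    have hskewb := skew_Bpath hd hB q
    have hbll : Bpath B q l l = 0 := diag_zero hd hskewb l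
    rw [stepC hd hB q l σ hσ1 hσc, stepG hd hB q l σ hσ1 hσc]
    set b := Bpath B q with hbdef
    have h1 : (Cmat B q * Emat σ l b)ᵀ = Fmat σ l bᵀ * (Cmat B q)ᵀ := by
      rw [Matrix.transpose_mul, Emat_transpose]
    rw [h1]
    calc Fmat σ l bᵀ * (Cmat B q)ᵀ * Matrix.diagonal d * (Gmat B q * Fmat (-σ) l b)
        = Fmat σ l bᵀ * ((Cmat B q)ᵀ * Matrix.diagonal d * Gmat B q * Fmat (-σ) l b) := by
          simp only [Matrix.mul_assoc]
      _ = Fmat σ l bᵀ * (Matrix.diagonal d * Fmat (-σ) l b) := by rw [ih]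
      _ = (Fmat σ l bᵀ * Matrix.diagonal d) * Fmat (-σ) l b := by rw [Matrix.mul_assoc]
      _ = Matrix.diagonal d * Fmat (-σ) l b * Fmat (-σ) l b := by rw [Dswap_F hd hskewb σ l]
      _ = Matrix.diagonal d := by
          rw [Matrix.mul_assoc, Fmat_mul_self hbll (-σ), Matrix.mul_one]

lemma det_CG (hsc : SignCoherenceOfC) {d : Fin n → ℤ} (hd : ∀ i, 0 < d i)
    {B : Mn} (hB : Skew d B) (p : List (Fin n)) :
    (Cmat B p).det * (Gmat B p).det = 1 := by
  have h := congrArg Matrix.det (dualityCDG hsc hd hB p)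
  rw [Matrix.det_mul, Matrix.det_mul, Matrix.det_transpose] at h
  have hD : (0 : ℤ) < (Matrix.diagonal d : Mn).det := by
    rw [Matrix.det_diagonal]
    exact Finset.prod_pos fun i _ => hd i
  have h2 : ((Cmat B p).det * (Gmat B p).det - 1) * (Matrix.diagonal d : Mn).det = 0 := by
    linear_combination h
  rcases mul_eq_zero.mp h2 with h3 | h3
  · linarith
  · exact absurd h3 hD.ne'

lemma dual_entry (hsc : SignCoherenceOfC) {d : Fin n → ℤ} (hd : ∀ i, 0 < d i)
    {B : Mn} (hB : Skew d B) (p : List (Fin n)) (l j : Fin n) :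
    ∑ m, Cmat B p m l * d m * Gmat B p m j = Matrix.diagonal d l j := by
  have h := congrFun (congrFun (dualityCDG hsc hd hB p) l) j
  rw [Matrix.mul_apply] at h
  calc ∑ m, Cmat B p m l * d m * Gmat B p m j
      = ∑ m, ((Cmat B p)ᵀ * Matrix.diagonal d) l m * Gmat B p m j := by
        apply Finset.sum_congr rfl
        intro m _
        rw [Matrix.mul_diagonal, Matrix.transpose_apply]
    _ = Matrix.diagonal d l j := h

lemma GDC' (hsc : SignCoherenceOfC) {d : Fin n → ℤ} (hd : ∀ i, 0 < d i)
    {B : Mn} (hB : Skew d B) (p : List (Fin n)) :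
    Gmat B p * Matrix.diagonal (fun i => ∏ m ∈ Finset.univ.erase i, d m) * (Cmat B p)ᵀ
      = Matrix.diagonal (fun i => ∏ m ∈ Finset.univ.erase i, d m) := by
  set d' : Fin n → ℤ := fun i => ∏ m ∈ Finset.univ.erase i, d m with hd'def
  set P : ℤ := ∏ m, d m with hPdef
  have hdd' : ∀ i, d i * d' i = P := fun i => Finset.mul_prod_erase _ _ (Finset.mem_univ i)
  have hDD : (Matrix.diagonal d : Mn) * Matrix.diagonal d' = P • (1 : Mn) := by
    rw [Matrix.diagonal_mul_diagonal]
    ext i j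
    rw [Matrix.diagonal_apply, Matrix.smul_apply, Matrix.one_apply]
    split_ifs with h
    · rw [hdd' i, smul_eq_mul, mul_one]
    · rw [smul_eq_mul, mul_zero]
  haveI : Invertible (Cmat B p)ᵀ := by
    apply Matrix.invertibleOfIsUnitDet
    rw [Matrix.det_transpose]
    exact IsUnit.of_mul_eq_one _ (det_CG hsc hd hB p)
  have key : (Cmat B p)ᵀ * (Matrix.diagonal d * (Gmat B p * Matrix.diagonal d' * (Cmat B p)ᵀ))
      = (Cmat B p)ᵀ * (Matrix.diagonal d * Matrix.diagonal d') := by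
    calc (Cmat B p)ᵀ * (Matrix.diagonal d * (Gmat B p * Matrix.diagonal d' * (Cmat B p)ᵀ))
        = ((Cmat B p)ᵀ * Matrix.diagonal d * Gmat B p) * (Matrix.diagonal d' * (Cmat B p)ᵀ) := by
          simp only [Matrix.mul_assoc]
      _ = Matrix.diagonal d * (Matrix.diagonal d' * (Cmat B p)ᵀ) := by
          rw [dualityCDG hsc hd hB p]
      _ = (Matrix.diagonal d * Matrix.diagonal d') * (Cmat B p)ᵀ := by
          rw [Matrix.mul_assoc]
      _ = (Cmat B p)ᵀ * (Matrix.diagonal d * Matrix.diagonal d') := by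
          rw [hDD, Matrix.smul_mul, Matrix.one_mul, Matrix.mul_smul, Matrix.mul_one]
  have h2 : Matrix.diagonal d * (Gmat B p * Matrix.diagonal d' * (Cmat B p)ᵀ)
      = Matrix.diagonal d * Matrix.diagonal d' := by
    have := congrArg (fun X => ⅟((Cmat B p)ᵀ) * X) key
    simpa only [invOf_mul_cancel_left] using this
  rw [Matrix.diagonal_mul_diagonal] at h2
  have h3 : ∀ i, d i * d' i = d i * d' i := fun _ => rfl
  ext i j
  have := congrFun (congrFun h2 i) j
  rw [Matrix.diagonal_mul] at this
  have h4 : d i * (Gmat B p * Matrix.diagonal d' * (Cmat B p)ᵀ) i j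
      = d i * Matrix.diagonal d' i j := by
    rw [this, Matrix.diagonal_apply, Matrix.diagonal_apply]
    split_ifs with h
    · rfl
    · rw [mul_zero]
  exact mul_left_cancel₀ (hd i).ne' h4

lemma GDC'_entry (hsc : SignCoherenceOfC) {d : Fin n → ℤ} (hd : ∀ i, 0 < d i)
    {B : Mn} (hB : Skew d B) (p : List (Fin n)) (k j : Fin n) :
    ∑ m, Gmat B p k m * (∏ t ∈ Finset.univ.erase m, d t) * Cmat B p j m
      = Matrix.diagonal (fun i => ∏ t ∈ Finset.univ.erase i, d t) k j := by
  have h := congrFun (congrFun (GDC' hsc hd hB p) k) j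
  rw [Matrix.mul_apply] at h
  calc ∑ m, Gmat B p k m * (∏ t ∈ Finset.univ.erase m, d t) * Cmat B p j m
      = ∑ m, (Gmat B p * Matrix.diagonal (fun i => ∏ t ∈ Finset.univ.erase i, d t)) k m
          * ((Cmat B p)ᵀ) m j := by
        apply Finset.sum_congr rfl
        intro m _
        rw [Matrix.mul_diagonal, Matrix.transpose_apply]
    _ = _ := h


/-! ### The master statement -/

def Conc (B : Mn) (p : List (Fin n)) (k : Fin n) : Prop :=
  ∃ ε : ℤ, IsRowSign ε (Gmat B p) k ∧
    Cmat (mutate B k) (k :: p) = (Jmat k + rowSel k (matPos ((-ε) • B))) * Cmat B p ∧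
    Gmat (mutate B k) (k :: p) = (Jmat k + colSel k (matPos (ε • B))) * Gmat B p

lemma Emat_def (σ : ℤ) (k : Fin n) (B : Mn) :
    (Jmat k + rowSel k (matPos (σ • B)) : Mn) = Emat σ k B := rfl

lemma Fmat_def (σ : ℤ) (k : Fin n) (B : Mn) :
    (Jmat k + colSel k (matPos (σ • B)) : Mn) = Fmat σ k B := rfl

/-! ### ±1 for concentrated rows and columns -/

lemma col_pm_one (hsc : SignCoherenceOfC) {d : Fin n → ℤ} (hd : ∀ i, 0 < d i)
    {B : Mn} (hB : Skew d B) (p : List (Fin n)) {l k : Fin n}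
    (hconc : ∀ i, i ≠ k → Cmat B p i l = 0) :
    Cmat B p k l = 1 ∨ Cmat B p k l = -1 := by
  have hdet : IsUnit (Cmat B p).det := IsUnit.of_mul_eq_one _ (det_CG hsc hd hB p)
  have hCeq : Cmat B p = Matrix.updateCol (Cmat B p) l (Cmat B p k l • Pi.single k 1) := by
    ext i j
    rw [Matrix.updateCol_apply]
    split_ifs with h
    · rw [h, Pi.smul_apply, Pi.single_apply, smul_eq_mul]
      by_cases hik : i = k
      · rw [if_pos hik, mul_one, hik]
      · rw [if_neg hik, mul_zero, hconc i hik]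
    · rfl
  have h2 := congrArg Matrix.det hCeq
  rw [Matrix.det_updateCol_smul] at h2
  have hdvd : Cmat B p k l ∣ (Cmat B p).det := ⟨_, h2⟩
  exact Int.isUnit_iff.mp (isUnit_of_dvd_unit hdvd hdet)

lemma row_pm_one (hsc : SignCoherenceOfC) {d : Fin n → ℤ} (hd : ∀ i, 0 < d i)
    {B : Mn} (hB : Skew d B) (p : List (Fin n)) {k l : Fin n}
    (hconc : ∀ j, j ≠ l → Gmat B p k j = 0) :
    Gmat B p k l = 1 ∨ Gmat B p k l = -1 := by
  have hdet : IsUnit (Gmat B p).det := by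
    have := det_CG hsc hd hB p
    exact IsUnit.of_mul_eq_one _ (by rw [mul_comm] at this; exact this)
  have hGeq : Gmat B p = Matrix.updateRow (Gmat B p) k (Gmat B p k l • Pi.single l 1) := by
    ext i j
    rw [Matrix.updateRow_apply]
    split_ifs with h
    · rw [h, Pi.smul_apply, Pi.single_apply, smul_eq_mul]
      by_cases hjl : j = l
      · rw [if_pos hjl, mul_one, hjl]
      · rw [if_neg hjl, mul_zero, hconc j hjl]
    · rfl
  have h2 := congrArg Matrix.det hGeq
  rw [Matrix.det_updateRow_smul] at h2
  have hdvd : Gmat B p k l ∣ (Gmat B p).det := ⟨_, h2⟩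
  exact Int.isUnit_iff.mp (isUnit_of_dvd_unit hdvd hdet)

/-! ### Reverse path duality -/

lemma rev (hsc : SignCoherenceOfC) {d : Fin n → ℤ} (hd : ∀ i, 0 < d i)
    {B : Mn} (hB : Skew d B) (p : List (Fin n))
    (H : ∀ q : List (Fin n), q.length < p.length → ∀ B' : Mn, Skew d B' → ∀ k, Conc B' q k) :
    Matrix.diagonal d * Cmat (-(Bpath B p)) p.reverse = (Gmat B p)ᵀ * Matrix.diagonal d ∧
    Matrix.diagonal d * Gmat (-(Bpath B p)) p.reverse = (Cmat B p)ᵀ * Matrix.diagonal d := by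
  induction p using List.reverseRecOn with
  | nil =>
    rw [Bpath_nil, List.reverse_nil]
    constructor <;> simp [Cmat_nil, Gmat_nil]
  | append_singleton q l ih =>
    have hlen1 : (q ++ [l]).length = q.length + 1 := by simp
    have Hq : ∀ r : List (Fin n), r.length < q.length → ∀ B' : Mn, Skew d B' → ∀ k, Conc B' r k := by
      intro r hr
      exact H r (by omega)
    obtain ⟨hCrev, hGrev⟩ := ih Hq
    have hskewb := skew_Bpath hd hB q
    have hbll : Bpath B q l l = 0 := diag_zero hd hskewb l
    have hlen : q.reverse.length < (q ++ [l]).length := by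
      rw [List.length_reverse]; omega
    obtain ⟨ε, hεrow, hCf, hGf⟩ := H q.reverse hlen (-(Bpath B q)) (skew_neg hskewb) l
    have hmut : mutate (-(Bpath B q)) l = -(Bpath B (q ++ [l])) := by
      rw [mutate_neg, Bpath_append]
    have hrev : (q ++ [l]).reverse = l :: q.reverse := by simp
    have hσc : ∀ i, 0 ≤ ε * Cmat B q i l := by
      intro i
      have h1 := hεrow.2.2 i
      have h2 := congrFun (congrFun hGrev l) i
      rw [Matrix.diagonal_mul, Matrix.mul_diagonal, Matrix.transpose_apply] at h2
      have h3 : 0 ≤ ε * (Cmat B q i l * d i) := by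
        rw [← h2]
        have h4 : ε * (d l * Gmat (-(Bpath B q)) q.reverse l i)
            = d l * (ε * Gmat (-(Bpath B q)) q.reverse l i) := by ring
        rw [h4]
        exact mul_nonneg (hd l).le h1
      by_contra hneg
      push_neg at hneg
      nlinarith [hd i]
    have hε1 := hεrow.1
    have hCstep := stepC hd hB q l ε hε1 hσc
    have hGstep := stepG hd hB q l ε hε1 hσc
    constructor
    · rw [hrev, ← hmut, hCf]
      have hE : (Jmat l + rowSel l (matPos ((-ε) • (-(Bpath B q)))) : Mn)
          = Emat ε l (Bpath B q) := by
        rw [show ((-ε) • (-(Bpath B q)) : Mn) = ε • Bpath B q by simp]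
        rfl
      rw [hE, hGstep, Matrix.transpose_mul, Fmat_transpose]
      rw [← Matrix.mul_assoc, Dswap_E hd hskewb ε l, Matrix.mul_assoc, hCrev,
        ← Matrix.mul_assoc]
    · rw [hrev, ← hmut, hGf]
      have hF : (Jmat l + colSel l (matPos (ε • (-(Bpath B q)))) : Mn)
          = Fmat (-ε) l (Bpath B q) := by
        rw [show (ε • (-(Bpath B q)) : Mn) = (-ε) • Bpath B q by simp]
        rfl
      rw [hF, hCstep, Matrix.transpose_mul, Emat_transpose]
      rw [← Matrix.mul_assoc, ← Dswap_F hd hskewb ε l, Matrix.mul_assoc, hGrev,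
        ← Matrix.mul_assoc]

/-! ### Row sign coherence of G -/

lemma rowsign_exists (hsc : SignCoherenceOfC) {d : Fin n → ℤ} (hd : ∀ i, 0 < d i)
    {B : Mn} (hB : Skew d B) (p : List (Fin n))
    (H : ∀ q : List (Fin n), q.length < p.length → ∀ B' : Mn, Skew d B' → ∀ k, Conc B' q k)
    (k : Fin n) :
    ∃ ε : ℤ, IsRowSign ε (Gmat B p) k := by
  obtain ⟨hCrev, -⟩ := rev hsc hd hB p H
  have hskewb := skew_Bpath hd hB p
  obtain ⟨⟨i0, hi0⟩, hco⟩ := hsc (Fin n) (-(Bpath B p))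
    (isSkewSymmetrizable_of hd (skew_neg hskewb)) p.reverse k
  have hent : ∀ i, d i * Cmat (-(Bpath B p)) p.reverse i k = Gmat B p k i * d k := by
    intro i
    have h := congrFun (congrFun hCrev i) k
    rwa [Matrix.diagonal_mul, Matrix.mul_diagonal, Matrix.transpose_apply] at h
  have hne : Gmat B p k i0 ≠ 0 := by
    intro h0
    apply hi0
    have h1 := hent i0
    rw [h0, zero_mul] at h1
    rcases mul_eq_zero.mp h1 with h2 | h2
    · exact absurd h2 (hd i0).ne'
    · exact h2
  rcases hco with h | h
  · refine ⟨1, Or.inl rfl, ⟨i0, hne⟩, fun j => ?_⟩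
    rw [one_mul]
    have h1 : 0 ≤ d j * Cmat (-(Bpath B p)) p.reverse j k := mul_nonneg (hd j).le (h j)
    rw [hent j] at h1
    by_contra hgl
    push_neg at hgl
    nlinarith [hd k]
  · refine ⟨-1, Or.inr rfl, ⟨i0, hne⟩, fun j => ?_⟩
    have h1 : d j * Cmat (-(Bpath B p)) p.reverse j k ≤ 0 :=
      mul_nonpos_of_nonneg_of_nonpos (hd j).le (h j)
    rw [hent j] at h1
    by_contra hgl
    push_neg at hgl
    nlinarith [hd k]


/-! ### Master induction -/

theorem master (hsc : SignCoherenceOfC) :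
    ∀ (m : ℕ) (d : Fin n → ℤ) (B : Mn) (p : List (Fin n)) (k : Fin n),
      (∀ i, 0 < d i) → Skew d B → p.length = m → Conc B p k := by
  intro m
  induction m using Nat.strong_induction_on with
  | _ m IH =>
  intro d B p k hd hB hlen
  rcases List.eq_nil_or_concat' p with rfl | ⟨p₀, l, rfl⟩
  · -- base case
    refine ⟨1, ?_, ?_, ?_⟩
    · rw [Gmat_nil]
      refine ⟨Or.inl rfl, ⟨k, by simp [Matrix.one_apply]⟩, fun j => ?_⟩
      rw [one_mul]
      by_cases h : k = j <;> simp [Matrix.one_apply, h]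
    · rw [Cmat_nil, Matrix.mul_one, Emat_def, Cmat_single, Emat_mutate]
    · rw [Gmat_nil, Matrix.mul_one, Fmat_def, Gmat_single, Fmat_mutate]
  · -- step case
    have hlen1 : (p₀ ++ [l]).length = p₀.length + 1 := by simp
    have hlen0 : p₀.length < m := by omega
    have hskewb := skew_Bpath hd hB p₀
    have hbll : Bpath B p₀ l l = 0 := diag_zero hd hskewb l
    have hBkk : B k k = 0 := diag_zero hd hB k
    have hB1 : Skew d (mutate B k) := mutate_skew hd hB k
    obtain ⟨ε, hεrow, hC', hG'⟩ := IH p₀.length hlen0 d B p₀ k hd hB rfl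
    rw [Emat_def] at hC'
    rw [Fmat_def] at hG'
    have hε1 : ε = 1 ∨ ε = -1 := hεrow.1
    have hεsq : ε * ε = 1 := by rcases hε1 with h | h <;> rw [h] <;> norm_num
    obtain ⟨σ, hσ1, hσc, hσne⟩ := exists_colsign hsc hd hB p₀ l
    obtain ⟨σ', hσ'1, hσ'c, hσ'ne⟩ := exists_colsign hsc hd hB1 (k :: p₀) l
    have hσsq : σ * σ = 1 := by rcases hσ1 with h | h <;> rw [h] <;> norm_num
    have hCstep := stepC hd hB p₀ l σ hσ1 hσc
    have hGstep := stepG hd hB p₀ l σ hσ1 hσc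
    have hC'step : Cmat (mutate B k) ((k :: p₀) ++ [l])
        = Cmat (mutate B k) (k :: p₀) * Emat σ' l (Bpath B p₀) := by
      have h := stepC hd hB1 (k :: p₀) l σ' hσ'1 hσ'c
      rwa [Bpath_mutate_cons] at h
    have hG'step : Gmat (mutate B k) ((k :: p₀) ++ [l])
        = Gmat (mutate B k) (k :: p₀) * Fmat (-σ') l (Bpath B p₀) := by
      have h := stepG hd hB1 (k :: p₀) l σ' hσ'1 hσ'c
      rwa [Bpath_mutate_cons] at h
    have hconsapp : (k :: p₀) ++ [l] = k :: (p₀ ++ [l]) := rfl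
    have H : ∀ q : List (Fin n), q.length < (p₀ ++ [l]).length →
        ∀ B' : Mn, Skew d B' → ∀ k', Conc B' q k' := by
      intro q hq B' hB' k'
      exact IH q.length (by omega) d B' q k' hd hB' rfl
    by_cases hgc : ∀ j, j ≠ l → Gmat B p₀ k j = 0
    · -- concentrated case
      obtain ⟨j0, hj0⟩ := hεrow.2.1
      have hGkl_ne : Gmat B p₀ k l ≠ 0 := by
        by_cases h : j0 = l
        · rwa [h] at hj0
        · exact absurd (hgc j0 h) hj0
      have hcc : ∀ j, j ≠ k → Cmat B p₀ j l = 0 := by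
        intro j hjk
        have h := GDC'_entry hsc hd hB p₀ k j
        rw [Matrix.diagonal_apply, if_neg (fun hh : k = j => hjk hh.symm)] at h
        rw [Finset.sum_eq_single l] at h
        · have hd'l : 0 < ∏ t ∈ Finset.univ.erase l, d t :=
            Finset.prod_pos fun t _ => hd t
          rcases mul_eq_zero.mp h with h5 | h5
          · rcases mul_eq_zero.mp h5 with h6 | h6
            · exact absurd h6 hGkl_ne
            · exact absurd h6 hd'l.ne'
          · exact h5
        · intro m' _ hml
          rw [hgc m' hml, zero_mul, zero_mul]
        · intro hmem
          exact absurd (Finset.mem_univ l) hmem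
      obtain ⟨i0, hi0⟩ := hσne
      have hCkl_ne : Cmat B p₀ k l ≠ 0 := by
        by_cases h : i0 = k
        · rwa [h] at hi0
        · exact absurd (hcc i0 h) hi0
      have hrel : Cmat B p₀ k l * d k * Gmat B p₀ k l = d l := by
        have h := dual_entry hsc hd hB p₀ l l
        rw [Matrix.diagonal_apply, if_pos rfl] at h
        rw [Finset.sum_eq_single k] at h
        · exact h
        · intro m' _ hmk
          rw [hcc m' hmk, zero_mul, zero_mul]
        · intro hmem
          exact absurd (Finset.mem_univ k) hmem
      have hCpm := col_pm_one hsc hd hB p₀ hcc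
      have hGpm := row_pm_one hsc hd hB p₀ hgc
      have hCσ : Cmat B p₀ k l = σ := by
        have h1 := hσc k
        rcases hCpm with h | h <;> rcases hσ1 with h2 | h2 <;> rw [h, h2] at h1 ⊢ <;>
          first | rfl | (exfalso; norm_num at h1)
      have hGε : Gmat B p₀ k l = ε := by
        have h1 := hεrow.2.2 l
        rcases hGpm with h | h <;> rcases hε1 with h2 | h2 <;> rw [h, h2] at h1 ⊢ <;>
          first | rfl | (exfalso; norm_num at h1)
      have hεσ : ε = σ := by
        rw [hCσ, hGε] at hrel
        rcases hσ1 with h2 | h2 <;> rcases hε1 with h3 | h3 <;> rw [h2, h3] at hrel ⊢ <;>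
          first | rfl | (exfalso; nlinarith [hd k, hd l])
      have hC'kl : Cmat (mutate B k) (k :: p₀) k l = -(Cmat B p₀ k l) := by
        rw [hC', Emat_mul_apply, if_pos rfl]
        have hsum : ∑ m', max ((-ε) * B k m') 0 * Cmat B p₀ m' l = 0 := by
          apply Finset.sum_eq_zero
          intro m' _
          by_cases hmk : m' = k
          · rw [hmk, hBkk, mul_zero]
            simp
          · rw [hcc m' hmk, mul_zero]
        rw [hsum, add_zero]
      have hσ'σ : σ' = -σ := by
        have h1 := hσ'c k
        rw [hC'kl, hCσ] at h1
        rcases hσ1 with h2 | h2 <;> rcases hσ'1 with h3 | h3 <;> rw [h2] at h1 ⊢ <;>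
          rw [h3] at h1 ⊢ <;> first | rfl | (exfalso; norm_num at h1) | norm_num
      have hrow : ∀ j, Gmat B (p₀ ++ [l]) k j = if j = l then -ε else 0 := by
        intro j
        rw [hGstep, mul_Fmat_apply]
        by_cases hjl : j = l
        · rw [if_pos hjl]
          have hsum : ∑ m', Gmat B p₀ k m' * max (-σ * Bpath B p₀ m' l) 0 = 0 := by
            apply Finset.sum_eq_zero
            intro m' _
            by_cases hml : m' = l
            · rw [hml, hbll, mul_zero]
              simp
            · rw [hgc m' hml, zero_mul]
          rw [hsum, add_zero, hGε, if_pos hjl]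
        · rw [if_neg hjl, hgc j hjl, if_neg hjl]
      refine ⟨-ε, ?_, ?_, ?_⟩
      · refine ⟨?_, ⟨l, ?_⟩, fun j => ?_⟩
        · rcases hε1 with h | h <;> rw [h]
          · exact Or.inr rfl
          · exact Or.inl (by norm_num)
        · rw [hrow l, if_pos rfl]
          rcases hε1 with h | h <;> rw [h] <;> norm_num
        · rw [hrow j]
          by_cases hjl : j = l
          · rw [if_pos hjl]
            rcases hε1 with h | h <;> rw [h] <;> norm_num
          · rw [if_neg hjl, mul_zero]
      · -- C formula, concentrated case
        rw [Emat_def, show (-(-ε) : ℤ) = ε from neg_neg ε, ← hconsapp, hC'step, hσ'σ, hC',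
          hCstep, ← Matrix.mul_assoc]
        have hUkl : (Emat (-ε) k B * Cmat B p₀) k l = -σ := by
          rw [← hC', hC'kl, hCσ]
        have hVU : ∀ j, (Emat ε k B * Cmat B p₀) k j
            = (Emat (-ε) k B * Cmat B p₀) k j + Bpath B p₀ l j := by
          intro j
          rw [Emat_mul_apply, if_pos rfl, Emat_mul_apply, if_pos rfl]
          have h1 : ∑ m', max (ε * B k m') 0 * Cmat B p₀ m' j
              - ∑ m', max ((-ε) * B k m') 0 * Cmat B p₀ m' j
              = ε * ∑ m', B k m' * Cmat B p₀ m' j := by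
            rw [← Finset.sum_sub_distrib, Finset.mul_sum]
            apply Finset.sum_congr rfl
            intro m' _
            have h2 : max (ε * B k m') 0 - max (-(ε * B k m')) 0 = ε * B k m' := pp_sub _
            have h3 : ((-ε) * B k m' : ℤ) = -(ε * B k m') := by ring
            rw [h3]
            linear_combination (Cmat B p₀ m' j) * h2
          have h4 : ∑ m', B k m' * Cmat B p₀ m' j
              = ∑ m', Gmat B p₀ k m' * Bpath B p₀ m' j := by
            have h5 := congrFun (congrFun (GB_BC hd hB p₀) k) j
            rw [Matrix.mul_apply, Matrix.mul_apply] at h5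
            exact h5.symm
          have h6 : ∑ m', Gmat B p₀ k m' * Bpath B p₀ m' j = ε * Bpath B p₀ l j := by
            rw [Finset.sum_eq_single l]
            · rw [hGε]
            · intro m' _ hml
              rw [hgc m' hml, zero_mul]
            · intro hmem
              exact absurd (Finset.mem_univ l) hmem
          have h8 : ∑ m', max (ε * B k m') 0 * Cmat B p₀ m' j
              - ∑ m', max ((-ε) * B k m') 0 * Cmat B p₀ m' j = Bpath B p₀ l j := by
            rw [h1, h4, h6, ← mul_assoc, hεsq, one_mul]
          linarith [h8]
        have hVkl : (Emat ε k B * Cmat B p₀) k l = -σ := by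
          rw [hVU l, hUkl, hbll, add_zero]
        ext i j
        rw [mul_Emat_apply _ hbll, mul_Emat_apply _ hbll]
        by_cases hik : i = k
        · rw [hik]
          by_cases hjl : j = l
          · rw [if_pos hjl, if_pos hjl, hUkl, hVkl]
          · rw [if_neg hjl, if_neg hjl, hVU j, hUkl, hVkl]
            have hx : ((-σ) * Bpath B p₀ l j : ℤ) = -(σ * Bpath B p₀ l j) := by ring
            rw [hx]
            linear_combination σ * pp_sub (σ * Bpath B p₀ l j) + (Bpath B p₀ l j) * hσsq
        · have hUi : ∀ j', (Emat (-ε) k B * Cmat B p₀) i j' = Cmat B p₀ i j' := fun j' => by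
            rw [Emat_mul_apply, if_neg hik]
          have hVi : ∀ j', (Emat ε k B * Cmat B p₀) i j' = Cmat B p₀ i j' := fun j' => by
            rw [Emat_mul_apply, if_neg hik]
          by_cases hjl : j = l
          · rw [if_pos hjl, if_pos hjl, hUi, hVi]
          · rw [if_neg hjl, if_neg hjl, hUi, hVi, hUi, hVi, hcc i hik]
            ring
      · -- G formula, concentrated case
        rw [Fmat_def, ← hconsapp, hG'step, hσ'σ, neg_neg, hG', hGstep, ← Matrix.mul_assoc]
        have hXk : ∀ j', (Fmat ε k B * Gmat B p₀) k j' = -(Gmat B p₀ k j') := fun j' => by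
          rw [Fmat_mul_apply _ hBkk, if_pos rfl]
        have hYk : ∀ j', (Fmat (-ε) k B * Gmat B p₀) k j' = -(Gmat B p₀ k j') := fun j' => by
          rw [Fmat_mul_apply _ hBkk, if_pos rfl]
        have hXi : ∀ i j', i ≠ k → (Fmat ε k B * Gmat B p₀) i j'
            = Gmat B p₀ i j' + max (ε * B i k) 0 * Gmat B p₀ k j' := fun i j' hik => by
          rw [Fmat_mul_apply _ hBkk, if_neg hik]
        have hYi : ∀ i j', i ≠ k → (Fmat (-ε) k B * Gmat B p₀) i j'
            = Gmat B p₀ i j' + max ((-ε) * B i k) 0 * Gmat B p₀ k j' := fun i j' hik => by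
          rw [Fmat_mul_apply _ hBkk, if_neg hik]
        ext i j
        rw [mul_Fmat_apply, mul_Fmat_apply]
        by_cases hjl : j = l
        · rw [if_pos hjl, if_pos hjl]
          by_cases hik : i = k
          · rw [hik]
            have hs1 : ∑ m', (Fmat ε k B * Gmat B p₀) k m'
                * max (σ * Bpath B p₀ m' l) 0 = 0 := by
              apply Finset.sum_eq_zero
              intro m' _
              by_cases hml : m' = l
              · rw [hml, hbll, mul_zero]
                simp
              · rw [hXk, hgc m' hml, neg_zero, zero_mul]
            have hs2 : ∑ m', (Fmat (-ε) k B * Gmat B p₀) k m'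
                * max ((-σ) * Bpath B p₀ m' l) 0 = 0 := by
              apply Finset.sum_eq_zero
              intro m' _
              by_cases hml : m' = l
              · rw [hml, hbll, mul_zero]
                simp
              · rw [hYk, hgc m' hml, neg_zero, zero_mul]
            rw [hs1, hs2, hXk, hYk]
          · have hsX : ∑ m', (Fmat ε k B * Gmat B p₀) i m' * max (σ * Bpath B p₀ m' l) 0
                = ∑ m', Gmat B p₀ i m' * max (σ * Bpath B p₀ m' l) 0 := by
              apply Finset.sum_congr rfl
              intro m' _
              by_cases hml : m' = l
              · rw [hml, hbll, mul_zero]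
                simp
              · rw [hXi i m' hik, hgc m' hml, mul_zero, add_zero]
            have hsY : ∑ m', (Fmat (-ε) k B * Gmat B p₀) i m' * max ((-σ) * Bpath B p₀ m' l) 0
                = ∑ m', Gmat B p₀ i m' * max ((-σ) * Bpath B p₀ m' l) 0 := by
              apply Finset.sum_congr rfl
              intro m' _
              by_cases hml : m' = l
              · rw [hml, hbll, mul_zero]
                simp
              · rw [hYi i m' hik, hgc m' hml, mul_zero, add_zero]
            have hsum : ∑ m', Gmat B p₀ i m' * max (σ * Bpath B p₀ m' l) 0
                - ∑ m', Gmat B p₀ i m' * max ((-σ) * Bpath B p₀ m' l) 0 = B i k := by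
              have h1 : ∑ m', Gmat B p₀ i m' * max (σ * Bpath B p₀ m' l) 0
                  - ∑ m', Gmat B p₀ i m' * max ((-σ) * Bpath B p₀ m' l) 0
                  = σ * ∑ m', Gmat B p₀ i m' * Bpath B p₀ m' l := by
                rw [← Finset.sum_sub_distrib, Finset.mul_sum]
                apply Finset.sum_congr rfl
                intro m' _
                have h2 : max (σ * Bpath B p₀ m' l) 0 - max (-(σ * Bpath B p₀ m' l)) 0
                    = σ * Bpath B p₀ m' l := pp_sub _
                have h3 : ((-σ) * Bpath B p₀ m' l : ℤ) = -(σ * Bpath B p₀ m' l) := by ring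
                rw [h3]
                linear_combination (Gmat B p₀ i m') * h2
              have h4 : ∑ m', Gmat B p₀ i m' * Bpath B p₀ m' l
                  = ∑ m', B i m' * Cmat B p₀ m' l := by
                have h5 := congrFun (congrFun (GB_BC hd hB p₀) i) l
                rw [Matrix.mul_apply, Matrix.mul_apply] at h5
                exact h5
              have h6 : ∑ m', B i m' * Cmat B p₀ m' l = B i k * σ := by
                rw [Finset.sum_eq_single k]
                · rw [hCσ]
                · intro m' _ hmk
                  rw [hcc m' hmk, mul_zero]
                · intro hmem
                  exact absurd (Finset.mem_univ k) hmem
              rw [h1, h4, h6]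
              linear_combination (B i k) * hσsq
            rw [hsX, hsY, hXi i l hik, hYi i l hik, hGε]
            rcases hε1 with hee | hee <;> rw [hee] <;>
              simp only [one_mul, neg_one_mul, neg_neg, mul_one, mul_neg_one]
            · linear_combination hsum - pp_sub (B i k)
            · linear_combination hsum - pp_sub (B i k)
        · rw [if_neg hjl, if_neg hjl]
          by_cases hik : i = k
          · rw [hik, hXk, hYk]
          · rw [hXi i j hik, hYi i j hik, hgc j hjl]
            ring
    · -- non-concentrated case
      push_neg at hgc
      obtain ⟨j1, hj1ne, hj1⟩ := hgc
      have hσσ' : σ' = σ := by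
        by_contra hne
        have hσ'negσ : σ' = -σ := by
          rcases hσ1 with h1 | h1 <;> rcases hσ'1 with h2 | h2 <;> omega
        have hcc : ∀ i, i ≠ k → Cmat B p₀ i l = 0 := by
          intro i hik
          have h1 : Cmat (mutate B k) (k :: p₀) i l = Cmat B p₀ i l := by
            rw [hC', Emat_mul_apply, if_neg hik]
          have h2 := hσ'c i
          rw [h1, hσ'negσ] at h2
          have h3 := hσc i
          rcases hσ1 with h4 | h4 <;> rw [h4] at h2 h3 <;> linarith
        obtain ⟨i0, hi0⟩ := hσne
        have hCkl : Cmat B p₀ k l ≠ 0 := by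
          by_cases hik : i0 = k
          · rwa [hik] at hi0
          · exact absurd (hcc i0 hik) hi0
        apply hj1
        have h := dual_entry hsc hd hB p₀ l j1
        rw [Matrix.diagonal_apply, if_neg (fun hh : l = j1 => hj1ne hh.symm)] at h
        rw [Finset.sum_eq_single k] at h
        · rcases mul_eq_zero.mp h with h5 | h5
          · rcases mul_eq_zero.mp h5 with h6 | h6
            · exact absurd h6 hCkl
            · exact absurd h6 (hd k).ne'
          · exact h5
        · intro m' _ hmk
          rw [hcc m' hmk, zero_mul, zero_mul]
        · intro hmem
          exact absurd (Finset.mem_univ k) hmem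
      obtain ⟨ε₀, hε₀⟩ := rowsign_exists hsc hd hB (p₀ ++ [l]) H k
      have hGplrow : ∀ j, j ≠ l → Gmat B (p₀ ++ [l]) k j = Gmat B p₀ k j := by
        intro j hjl
        rw [hGstep, mul_Fmat_apply, if_neg hjl]
      have hε₀ε : ε₀ = ε := by
        have h1 := hε₀.2.2 j1
        rw [hGplrow j1 hj1ne] at h1
        have h2 := hεrow.2.2 j1
        rcases hε₀.1 with h3 | h3 <;> rcases hε1 with h4 | h4 <;>
          rw [h3] at h1 ⊢ <;> rw [h4] at h2 ⊢ <;>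
          first | rfl | (exfalso; apply hj1; linarith)
      refine ⟨ε, by rw [← hε₀ε]; exact hε₀, ?_, ?_⟩
      · rw [Emat_def, ← hconsapp, hC'step, hσσ', hC', hCstep, Matrix.mul_assoc]
      · rw [Fmat_def, ← hconsapp, hG'step, hσσ', hG', hGstep, Matrix.mul_assoc]

end CGAux

end Aux

/-- the `k`-th row of `G^{B;t_0}_t` is sign-coherent with row sign `ε`, and the
reduced initial-seed mutation formulas for the `C`- and `G`-matrices hold. -/
theorem CG_initialSeedMutation_reduced (hsc : SignCoherenceOfC) {n : ℕ}
    (B : Matrix (Fin n) (Fin n) ℤ) (hB : IsSkewSymmetrizable B)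
    (p : List (Fin n)) (k : Fin n) :
    ∃ ε : ℤ, IsRowSign ε (Gmat B p) k ∧
      Cmat (mutate B k) (k :: p) = (Jmat k + rowSel k (matPos ((-ε) • B))) * Cmat B p ∧
      Gmat (mutate B k) (k :: p) = (Jmat k + colSel k (matPos (ε • B))) * Gmat B p := by
  obtain ⟨d, hd, hskew⟩ := CGAux.skew_of_isSkewSymmetrizable hB
  exact CGAux.master hsc p.length d B p k hd hskew rfl
end
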